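/- arXiv:1808.07172 — 5 statements merged into one kernel-verified Lean document; each statement's English description precedes it below -/
import Mathlib

section
/- Let x ∈ ℝ^m be fixed, let the weights w_{ik} (1 ≤ i ≤ n, 1 ≤ k ≤ m) be i.i.d. Gaussian N(0, σ²/m) and the biases b_i (1 ≤ i ≤ n) be i.i.d. Gaussian N(0, σ_b²), all mutually independent, and set u_i = Σ_{k=1}^m w_{ik} x_k + b_i. Let ψ : ℝ → ℝ be measurable with |ψ| ≤ M. Then for any fixed distinct column indices j ≠ j', the sum S' = Σ_{i=1}^n ψ(u_i)² w_{ij} w_{ij'} is a sum of n i.i.d. random variables and satisfies Var(S') ≤ n M⁴ σ⁴ / m². -/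
open MeasureTheory ProbabilityTheory NNReal ENNReal Real Set Filter

lemma integral_sq_mul_exp_neg_mul_sq {b : ℝ} (hb : 0 < b) :
    ∫ x : ℝ, x ^ 2 * Real.exp (-b * x ^ 2) = Real.sqrt (π / b) / (2 * b) := by
  -- even reduction
  have heven : ∫ x : ℝ, x ^ 2 * Real.exp (-b * x ^ 2)
      = 2 * ∫ x in Ioi (0:ℝ), x ^ 2 * Real.exp (-b * x ^ 2) := by
    rw [← integral_comp_abs (f := fun x => x ^ 2 * Real.exp (-b * x ^ 2))]
    congr 1; ext x; rw [sq_abs]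
  rw [heven]
  -- FTC on Ioi 0 with F x = -(x * exp (-b x²)) / (2b)
  set F : ℝ → ℝ := fun x => -(x * Real.exp (-b * x ^ 2)) / (2 * b) with hF
  have hderiv : ∀ x ∈ Ici (0:ℝ), HasDerivAt F
      (x ^ 2 * Real.exp (-b * x ^ 2) - Real.exp (-b * x ^ 2) / (2 * b)) x := by
    intro x _
    have h1 : HasDerivAt (fun x : ℝ => -b * x ^ 2) (-b * (2 * x)) x := by
      simpa using ((hasDerivAt_pow 2 x).const_mul (-b))
    have h2 : HasDerivAt (fun x : ℝ => Real.exp (-b * x ^ 2))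
        (Real.exp (-b * x ^ 2) * (-b * (2 * x))) x := (Real.hasDerivAt_exp _).comp x h1
    have h3 : HasDerivAt (fun x : ℝ => x * Real.exp (-b * x ^ 2))
        (1 * Real.exp (-b * x ^ 2) + x * (Real.exp (-b * x ^ 2) * (-b * (2 * x)))) x :=
      (hasDerivAt_id x).mul h2
    have h4 := (h3.neg.div_const (2 * b))
    refine h4.congr_deriv ?_
    rw [_root_.div_eq_iff (by positivity), sub_mul, div_mul_cancel₀ _ (by positivity)]
    ring
  have hint_sq : IntegrableOn (fun x : ℝ => x ^ 2 * Real.exp (-b * x ^ 2)) (Ioi 0) := by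
    have := integrable_rpow_mul_exp_neg_mul_sq hb (s := 2) (by norm_num)
    have h2 : Integrable (fun x : ℝ => x ^ 2 * Real.exp (-b * x ^ 2)) := by
      simpa [Real.rpow_natCast] using this
    exact h2.integrableOn
  have hint_exp : IntegrableOn (fun x : ℝ => Real.exp (-b * x ^ 2)) (Ioi 0) :=
    (integrable_exp_neg_mul_sq hb).integrableOn
  have hint_deriv : IntegrableOn
      (fun x : ℝ => x ^ 2 * Real.exp (-b * x ^ 2) - Real.exp (-b * x ^ 2) / (2 * b)) (Ioi 0) :=
    hint_sq.sub (hint_exp.div_const _)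
  have htendsto : Tendsto F atTop (nhds 0) := by
    have h0 : Tendsto (fun x : ℝ => |x| ^ (1:ℝ) * Real.exp (-b * x ^ 2)) atTop (nhds 0) :=
      (tendsto_rpow_abs_mul_exp_neg_mul_sq_cocompact hb 1).mono_left
        (by rw [cocompact_eq_atBot_atTop]; exact le_sup_right)
    have : Tendsto (fun x : ℝ => -(x * Real.exp (-b * x ^ 2)) / (2 * b)) atTop (nhds (-0 / (2*b))) := by
        apply Filter.Tendsto.div_const
        apply Tendsto.neg
        apply h0.congr'
        filter_upwards [eventually_ge_atTop (0:ℝ)] with x hx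
        rw [abs_of_nonneg hx, Real.rpow_one]
    simpa [hF, neg_mul] using this
  have hFTC := integral_Ioi_of_hasDerivAt_of_tendsto' hderiv hint_deriv htendsto
  have hsplit : ∫ x in Ioi (0:ℝ), x ^ 2 * Real.exp (-b * x ^ 2)
      = (∫ x in Ioi (0:ℝ), (x ^ 2 * Real.exp (-b * x ^ 2) - Real.exp (-b * x ^ 2) / (2 * b)))
        + ∫ x in Ioi (0:ℝ), Real.exp (-b * x ^ 2) / (2 * b) := by
    rw [← integral_add hint_deriv (hint_exp.div_const _)]
    simp
  rw [hsplit, hFTC]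
  have : ∫ x in Ioi (0:ℝ), Real.exp (-b * x ^ 2) / (2 * b)
      = (Real.sqrt (π / b) / 2) / (2 * b) := by
    rw [integral_div, integral_gaussian_Ioi]
  rw [this]
  have hF0 : F 0 = 0 := by simp [hF]
  rw [hF0]
  ring

lemma integrable_sq_gaussianReal (v : ℝ≥0) :
    Integrable (fun x : ℝ => x ^ 2) (gaussianReal 0 v) := by
  by_cases hv : v = 0
  · subst hv; rw [gaussianReal_zero_var]
    refine ⟨(measurable_id.pow_const 2).aestronglyMeasurable, ?_⟩
    simp [HasFiniteIntegral, lintegral_dirac]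
  · rw [gaussianReal_of_var_ne_zero 0 hv]
    rw [gaussianPDF_def]
    have hmeas : Measurable fun x => (gaussianPDFReal 0 v x).toNNReal :=
      (measurable_gaussianPDFReal 0 v).real_toNNReal
    have : (fun x => ENNReal.ofReal (gaussianPDFReal 0 v x))
        = fun x => ((gaussianPDFReal 0 v x).toNNReal : ℝ≥0∞) := rfl
    rw [this, integrable_withDensity_iff_integrable_smul hmeas]
    have hb : (0:ℝ) < (2 * (v:ℝ))⁻¹ := by positivity
    have hint := integrable_rpow_mul_exp_neg_mul_sq hb (s := 2) (by norm_num)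
    have h2 : Integrable (fun x : ℝ => x ^ 2 * Real.exp (-(2 * (v:ℝ))⁻¹ * x ^ 2)) := by
      simpa [Real.rpow_natCast] using hint
    apply (h2.const_mul ((Real.sqrt (2 * Real.pi * v))⁻¹)).congr
    filter_upwards with x
    rw [NNReal.smul_def, Real.coe_toNNReal _ (gaussianPDFReal_nonneg 0 v x)]
    unfold gaussianPDFReal
    rw [smul_eq_mul]
    ring_nf

lemma integral_sq_gaussianReal (v : ℝ≥0) :
    ∫ x : ℝ, x ^ 2 ∂(gaussianReal 0 v) = v := by
  by_cases hv : v = 0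
  · subst hv; rw [gaussianReal_zero_var]; simp
  · rw [gaussianReal_of_var_ne_zero 0 hv, gaussianPDF_def]
    have hmeas : Measurable fun x => (gaussianPDFReal 0 v x).toNNReal :=
      (measurable_gaussianPDFReal 0 v).real_toNNReal
    have h1 : (fun x => ENNReal.ofReal (gaussianPDFReal 0 v x))
        = fun x => ((gaussianPDFReal 0 v x).toNNReal : ℝ≥0∞) := rfl
    rw [h1, integral_withDensity_eq_integral_smul hmeas]
    have hv' : (0:ℝ) < (v:ℝ) := by positivity
    have hb : (0:ℝ) < (2 * (v:ℝ))⁻¹ := by positivity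
    have key := integral_sq_mul_exp_neg_mul_sq hb
    have heq : ∀ x : ℝ, (gaussianPDFReal 0 v x).toNNReal • (x ^ 2)
        = (Real.sqrt (2 * Real.pi * v))⁻¹ * (x ^ 2 * Real.exp (-(2 * (v:ℝ))⁻¹ * x ^ 2)) := by
      intro x
      rw [NNReal.smul_def, Real.coe_toNNReal _ (gaussianPDFReal_nonneg 0 v x)]
      unfold gaussianPDFReal
      rw [smul_eq_mul]
      ring_nf
  -- now compute
    simp_rw [heq]
    rw [integral_const_mul, key]
    have h2 : Real.pi / (2 * (v:ℝ))⁻¹ = 2 * Real.pi * v := by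
      field_simp
    rw [h2]
    rw [div_eq_mul_inv, ← mul_assoc]
    have hs : (0:ℝ) < Real.sqrt (2 * Real.pi * v) := by
      apply Real.sqrt_pos.mpr; positivity
    rw [inv_mul_cancel₀ (ne_of_gt hs), one_mul]
    field_simp

section Aux
variable {Ω : Type*} [MeasurableSpace Ω] {μ : Measure Ω}

lemma iIndepFun_precomp {ι κ : Type*} {β : Type*} [mβ : MeasurableSpace β]
    {f : ι → Ω → β} (h : iIndepFun f μ) {g : κ → ι}
    (hg : Function.Injective g) :
    iIndepFun (fun k => f (g k)) μ := by
  classical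
  rw [iIndepFun_iff_measure_inter_preimage_eq_mul] at h ⊢
  intro S sets H
  set sets' : ι → Set β := fun i => ⋂ k ∈ S, ⋂ (_ : g k = i), sets k with hsets'
  have key : ∀ k₀ ∈ S, sets' (g k₀) = sets k₀ := by
    intro k₀ hk₀
    ext y
    simp only [hsets', Set.mem_iInter]
    constructor
    · intro hy; exact hy k₀ hk₀ rfl
    · intro hy k hk hgk
      obtain rfl := hg hgk; exact hy
  have hinter : (⋂ k ∈ S, (fun ω => f (g k) ω) ⁻¹' sets k)
      = ⋂ i ∈ S.image g, f i ⁻¹' sets' i := by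
    ext ω
    simp only [Set.mem_iInter, Finset.mem_image]
    constructor
    · rintro hω i ⟨k, hk, rfl⟩
      rw [key k hk]; exact hω k hk
    · intro hω k hk
      have := hω (g k) ⟨k, hk, rfl⟩
      rwa [key k hk] at this
  have Hm : ∀ i ∈ S.image g, MeasurableSet (sets' i) := by
    rintro i hi
    rcases Finset.mem_image.mp hi with ⟨k, hk, rfl⟩
    rw [key k hk]; exact H k hk
  rw [hinter, h (S.image g) Hm, Finset.prod_image (fun a ha b hb hab => hg hab)]
  exact Finset.prod_congr rfl fun k hk => by rw [key k hk]

lemma iIndepFun_group {ι κ τ : Type*} [Fintype τ] [Countable τ]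
    [IsProbabilityMeasure μ]
    {f : ι → Ω → ℝ} (hf : ∀ i, Measurable (f i))
    (h : iIndepFun f μ)
    (ρ : κ → τ → ι) (hρ : Function.Injective (fun p : κ × τ => ρ p.1 p.2)) :
    iIndepFun
      (fun k => fun ω t => f (ρ k t) ω) μ := by
  classical
  set V : κ → Ω → (τ → ℝ) := fun k ω t => f (ρ k t) ω with hV
  have hVmeas : ∀ k, Measurable (V k) := fun k =>
    measurable_pi_iff.mpr fun t => hf (ρ k t)
  rw [iIndepFun_iff_iIndep]
  set pis : κ → Set (Set Ω) := fun k =>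
    {S | ∃ s : τ → Set ℝ, (∀ t, MeasurableSet (s t)) ∧ S = V k ⁻¹' Set.pi Set.univ s} with hpis
  refine iIndepSets.iIndep (fun k => (hVmeas k).comap_le) pis ?_ ?_ ?_
  · -- IsPiSystem
    rintro k S ⟨s, hs, rfl⟩ S' ⟨s', hs', rfl⟩ -
    refine ⟨fun t => s t ∩ s' t, fun t => (hs t).inter (hs' t), ?_⟩
    rw [← Set.preimage_inter, ← Set.pi_inter_distrib]
  · -- generateFrom
    intro k
    conv_lhs => rw [← generateFrom_pi (α := fun _ : τ => ℝ)]
    rw [MeasurableSpace.comap_generateFrom]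
    congr
    ext S
    simp only [Set.mem_image, Set.mem_setOf_eq, hpis]
    constructor
    · rintro ⟨_, ⟨s, hs, rfl⟩, rfl⟩
      exact ⟨s, fun t => hs t (Set.mem_univ t), rfl⟩
    · rintro ⟨s, hs, rfl⟩
      exact ⟨_, ⟨s, fun t _ => hs t, rfl⟩, rfl⟩
  · -- iIndepSets
    rw [iIndepSets_iff]
    intro K E hE
    have hchoice : ∀ k, ∃ s : τ → Set ℝ,
        (∀ t, MeasurableSet (s t)) ∧ (k ∈ K → E k = V k ⁻¹' Set.pi Set.univ s) := by
      intro k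
      by_cases hk : k ∈ K
      · obtain ⟨s, hs, hEs⟩ := hE k hk
        exact ⟨s, hs, fun _ => hEs⟩
      · exact ⟨fun _ => Set.univ, fun _ => MeasurableSet.univ, fun h => absurd h hk⟩
    choose s hs1 hs2 using hchoice
    have hEeq : ∀ k ∈ K, E k = ⋂ t, f (ρ k t) ⁻¹' s k t := by
      intro k hk
      rw [hs2 k hk]
      ext ω
      simp [hV, Set.mem_pi]
    have h2 := iIndepFun_precomp (g := fun p : κ × τ => ρ p.1 p.2) h hρ
    rw [iIndepFun_iff_measure_inter_preimage_eq_mul] at h2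
    have hbig := h2 (K ×ˢ Finset.univ) (sets := fun p => s p.1 p.2)
      (fun p _ => hs1 p.1 p.2)
    have hXY : (⋂ p ∈ K ×ˢ (Finset.univ : Finset τ),
        (fun ω => f (ρ p.1 p.2) ω) ⁻¹' s p.1 p.2) = ⋂ k ∈ K, E k := by
      ext ω
      simp only [Set.mem_iInter, Finset.mem_product, Finset.mem_univ, and_true]
      constructor
      · intro hω k hk
        rw [hEeq k hk]
        exact Set.mem_iInter.mpr fun t => hω (k, t) hk
      · intro hω p hp
        have := hω p.1 hp
        rw [hEeq p.1 hp] at this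
        exact Set.mem_iInter.mp this p.2
    rw [hXY] at hbig
    rw [hbig, Finset.prod_product]
    refine Finset.prod_congr rfl fun k hk => ?_
    have hrow := iIndepFun_precomp (g := ρ k) h
      (fun t t' htt' => by
        have := hρ (a₁ := (k, t)) (a₂ := (k, t')) htt'
        exact (Prod.mk.injEq _ _ _ _).mp this |>.2)
    rw [iIndepFun_iff_measure_inter_preimage_eq_mul] at hrow
    have := hrow Finset.univ (sets := fun t => s k t) (fun t _ => hs1 k t)
    simp only [Set.iInter_true, Finset.mem_univ] at this ⊢
    rw [hEeq k hk]
    rw [← this]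

lemma map_group_eq_pi {ι τ : Type*} [Fintype τ] [IsProbabilityMeasure μ]
    {f : ι → Ω → ℝ} (hf : ∀ i, Measurable (f i))
    (h : iIndepFun f μ)
    (ρ : τ → ι) (hρ : Function.Injective ρ) :
    Measure.map (fun ω t => f (ρ t) ω) μ = Measure.pi (fun t => Measure.map (f (ρ t)) μ) := by
  have hprob : ∀ t, IsProbabilityMeasure (Measure.map (f (ρ t)) μ) :=
    fun t => Measure.isProbabilityMeasure_map (hf (ρ t)).aemeasurable
  haveI := hprob
  refine (Measure.pi_eq (μ := fun t => Measure.map (f (ρ t)) μ) fun s hs => ?_).symm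
  have hVmeas : Measurable (fun ω (t : τ) => f (ρ t) ω) :=
    measurable_pi_iff.mpr fun t => hf (ρ t)
  rw [Measure.map_apply hVmeas (MeasurableSet.univ_pi hs)]
  have hpre : (fun ω (t : τ) => f (ρ t) ω) ⁻¹' Set.pi Set.univ s
      = ⋂ t, f (ρ t) ⁻¹' s t := by
    ext ω; simp [Set.mem_pi]
  rw [hpre, (iIndepFun_precomp h hρ).meas_iInter (fun t => ⟨s t, hs t, rfl⟩)]
  exact Finset.prod_congr rfl fun t _ =>
    (Measure.map_apply (hf (ρ t)) (hs t)).symm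

end Aux

/-- **Single-step Domino Lemma, off-diagonal case.**
In a random layer with `m` inputs and `n` units, with weights `w i k ~ N(0, σ²/m)` i.i.d.,
biases `b i ~ N(0, σ_b²)` i.i.d., all mutually independent, pre-activations
`u i = ∑ k w i k * x k + b i` for a fixed input `x`, and `ψ` measurable with `|ψ| ≤ M`,
for distinct column indices `j ≠ j'` the sum `S' = ∑ i ψ(u i)² (w i j) (w i j')` is a sum
of `n` i.i.d. random variables and `Var S' ≤ n M⁴ σ⁴ / m²`.
Here `σ2 = σ²` and `σb2 = σ_b²` denote the variance parameters. -/
theorem domino_offdiagonal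
    {Ω : Type*} [MeasurableSpace Ω] (P : Measure Ω) [IsProbabilityMeasure P]
    (n m : ℕ) (hm : 0 < m) (x : Fin m → ℝ) (σ2 σb2 : ℝ≥0)
    (w : Fin n → Fin m → Ω → ℝ) (b : Fin n → Ω → ℝ)
    (hw_meas : ∀ i k, Measurable (w i k)) (hb_meas : ∀ i, Measurable (b i))
    (hw_law : ∀ i k, Measure.map (w i k) P = gaussianReal 0 (σ2 / (m : ℝ≥0)))
    (hb_law : ∀ i, Measure.map (b i) P = gaussianReal 0 σb2)
    (hindep : iIndepFun
      (Sum.elim (fun p : Fin n × Fin m => w p.1 p.2) b) P)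
    (ψ : ℝ → ℝ) (hψ : Measurable ψ) (M : ℝ) (hM : ∀ t, |ψ t| ≤ M)
    (j j' : Fin m) (hjj' : j ≠ j') :
    iIndepFun
        (fun i : Fin n => fun ω =>
          ψ (∑ k, w i k ω * x k + b i ω) ^ 2 * (w i j ω * w i j' ω)) P
    ∧ (∀ i i' : Fin n,
        IdentDistrib
          (fun ω => ψ (∑ k, w i k ω * x k + b i ω) ^ 2 * (w i j ω * w i j' ω))
          (fun ω => ψ (∑ k, w i' k ω * x k + b i' ω) ^ 2 * (w i' j ω * w i' j' ω)) P P)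
    ∧ variance
        (fun ω => ∑ i, ψ (∑ k, w i k ω * x k + b i ω) ^ 2 * (w i j ω * w i j' ω)) P
      ≤ n * M ^ 4 * (σ2 : ℝ) ^ 2 / (m : ℝ) ^ 2 := by
  classical
  set f : (Fin n × Fin m) ⊕ Fin n → Ω → ℝ :=
    Sum.elim (fun p : Fin n × Fin m => w p.1 p.2) b with hf
  have hfmeas : ∀ t, Measurable (f t) := by
    rintro (p | i)
    · exact hw_meas p.1 p.2
    · exact hb_meas i
  set ρ : Fin n → (Fin m ⊕ Unit) → (Fin n × Fin m) ⊕ Fin n :=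
    fun i => Sum.elim (fun k => Sum.inl (i, k)) (fun _ => Sum.inr i) with hρdef
  have hρ : Function.Injective (fun p : Fin n × (Fin m ⊕ Unit) => ρ p.1 p.2) := by
    rintro ⟨i, t⟩ ⟨i', t'⟩ hpq
    rcases t with k | u <;> rcases t' with k' | u' <;>
        simp only [hρdef, Sum.elim_inl, Sum.elim_inr, Sum.inl.injEq, Sum.inr.injEq,
          Prod.mk.injEq, reduceCtorEq] at hpq
    · simp [hpq.1, hpq.2]
    · simp [hpq]
  set G : ((Fin m ⊕ Unit) → ℝ) → ℝ := fun y =>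
    ψ (∑ k, y (Sum.inl k) * x k + y (Sum.inr ())) ^ 2 *
      (y (Sum.inl j) * y (Sum.inl j')) with hGdef
  have hG : Measurable G := by
    apply Measurable.mul
    · apply Measurable.pow_const
      apply hψ.comp
      fun_prop
    · exact (measurable_pi_apply _).mul (measurable_pi_apply _)
  -- Part 1: independence
  have part1 : iIndepFun
      (fun i : Fin n => fun ω =>
        ψ (∑ k, w i k ω * x k + b i ω) ^ 2 * (w i j ω * w i j' ω)) P := by
    have h1 := (iIndepFun_group hfmeas hindep ρ hρ).comp (fun _ => G) (fun _ => hG)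
    exact h1
  refine ⟨part1, ?_, ?_⟩
  -- Part 2: identically distributed
  · intro i i'
    have hmap : ∀ i : Fin n, Measure.map (fun ω t => f (ρ i t) ω) P
        = Measure.pi (fun t => Sum.elim
            (fun _ : Fin m => gaussianReal 0 (σ2 / (m : ℝ≥0)))
            (fun _ : Unit => gaussianReal 0 σb2) t) := by
      intro i
      rw [map_group_eq_pi hfmeas hindep (ρ i)
        (fun t t' htt' => by
          have := hρ (a₁ := (i, t)) (a₂ := (i, t')) htt'
          exact ((Prod.mk.injEq _ _ _ _).mp this).2)]
      congr 1
      funext t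
      rcases t with k | u
      · exact hw_law i k
      · exact hb_law i
    have hid : IdentDistrib (fun ω t => f (ρ i t) ω) (fun ω t => f (ρ i' t) ω) P P :=
      ⟨(measurable_pi_iff.mpr fun t => hfmeas (ρ i t)).aemeasurable,
       (measurable_pi_iff.mpr fun t => hfmeas (ρ i' t)).aemeasurable,
       by rw [hmap i, hmap i']⟩
    exact hid.comp hG
  -- Part 3: variance bound
  · set F : Fin n → Ω → ℝ := fun i ω =>
      ψ (∑ k, w i k ω * x k + b i ω) ^ 2 * (w i j ω * w i j' ω) with hFdef
    have hM0 : 0 ≤ M := le_trans (abs_nonneg _) (hM 0)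
    have hFmeas : ∀ i, Measurable (F i) := fun i =>
      ((hψ.comp ((Finset.measurable_sum _ fun k _ =>
        (hw_meas i k).mul_const (x k)).add (hb_meas i))).pow_const 2).mul
        ((hw_meas i j).mul (hw_meas i j'))
    set v : ℝ≥0 := σ2 / (m : ℝ≥0) with hvdef
    have hsecond : ∀ (i : Fin n) (k : Fin m), ∫ ω, (w i k ω) ^ 2 ∂P = (v : ℝ) := by
      intro i k
      have h := integral_map (μ := P) (hw_meas i k).aemeasurable
        (f := fun y : ℝ => y ^ 2) (measurable_id.pow_const 2).aestronglyMeasurable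
      rw [hw_law i k, integral_sq_gaussianReal] at h
      exact h.symm
    have hsqint : ∀ (i : Fin n) (k : Fin m), Integrable (fun ω => (w i k ω) ^ 2) P := by
      intro i k
      refine (integrable_map_measure (measurable_id.pow_const 2).aestronglyMeasurable
        (hw_meas i k).aemeasurable).mp ?_
      rw [hw_law i k]
      exact integrable_sq_gaussianReal _
    have hindep_jj' : ∀ i : Fin n, IndepFun (w i j) (w i j') P := by
      intro i
      exact hindep.indepFun (i := Sum.inl (i, j)) (j := Sum.inl (i, j'))
        (by simp [hjj'])
    have hsq_indep : ∀ i : Fin n,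
        IndepFun (fun ω => (w i j ω) ^ 2) (fun ω => (w i j' ω) ^ 2) P := fun i =>
      (hindep_jj' i).comp (measurable_id.pow_const 2) (measurable_id.pow_const 2)
    have hprodint : ∀ i : Fin n,
        Integrable (fun ω => (w i j ω) ^ 2 * (w i j' ω) ^ 2) P := fun i =>
      (hsq_indep i).integrable_mul (hsqint i j) (hsqint i j')
    have hmul : ∀ i : Fin n,
        ∫ ω, (w i j ω) ^ 2 * (w i j' ω) ^ 2 ∂P = (v : ℝ) * (v : ℝ) := by
      intro i
      have h := (hsq_indep i).integral_fun_mul_eq_mul_integral (hsqint i j).aestronglyMeasurable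
        (hsqint i j').aestronglyMeasurable
      rw [hsecond i j, hsecond i j'] at h
      exact h
    have hF2le : ∀ (i : Fin n) (ω : Ω),
        F i ω ^ 2 ≤ M ^ 4 * ((w i j ω) ^ 2 * (w i j' ω) ^ 2) := by
      intro i ω
      have h1 : ψ (∑ k, w i k ω * x k + b i ω) ^ 2 ≤ M ^ 2 := by
        rw [← sq_abs]
        exact pow_le_pow_left₀ (abs_nonneg _) (hM _) 2
      have h2 : F i ω ^ 2
          = (ψ (∑ k, w i k ω * x k + b i ω) ^ 2) ^ 2 * ((w i j ω) ^ 2 * (w i j' ω) ^ 2) := by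
        rw [hFdef]; ring
      rw [h2]
      have h3 : (ψ (∑ k, w i k ω * x k + b i ω) ^ 2) ^ 2 ≤ (M ^ 2) ^ 2 :=
        pow_le_pow_left₀ (sq_nonneg _) h1 2
      calc (ψ (∑ k, w i k ω * x k + b i ω) ^ 2) ^ 2 * ((w i j ω) ^ 2 * (w i j' ω) ^ 2)
          ≤ (M ^ 2) ^ 2 * ((w i j ω) ^ 2 * (w i j' ω) ^ 2) :=
            mul_le_mul_of_nonneg_right h3 (by positivity)
        _ = M ^ 4 * ((w i j ω) ^ 2 * (w i j' ω) ^ 2) := by ring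
    have hintF2 : ∀ i : Fin n, Integrable (fun ω => F i ω ^ 2) P := by
      intro i
      refine Integrable.mono' ((hprodint i).const_mul (M ^ 4))
        (((hFmeas i).pow_const 2).aestronglyMeasurable) ?_
      filter_upwards with ω
      rw [Real.norm_eq_abs, abs_of_nonneg (sq_nonneg _)]
      exact hF2le i ω
    have hmem : ∀ i : Fin n, MemLp (F i) 2 P := by
      intro i
      refine (memLp_two_iff_integrable_sq (hFmeas i).aestronglyMeasurable).mpr ?_
      have := hintF2 i
      simpa [pow_two] using this
    have hsum_eq : (fun ω => ∑ i, F i ω) = ∑ i, F i := by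
      funext ω; simp
    have hvar_sum : variance (fun ω => ∑ i, F i ω) P = ∑ i, variance (F i) P := by
      rw [hsum_eq]
      exact IndepFun.variance_sum (fun i _ => hmem i)
        (fun i _ i' _ hii' => part1.indepFun hii')
    rw [show (fun ω => ∑ i, ψ (∑ k, w i k ω * x k + b i ω) ^ 2 * (w i j ω * w i j' ω))
        = (fun ω => ∑ i, F i ω) from rfl, hvar_sum]
    have hbound : ∀ i : Fin n, variance (F i) P ≤ M ^ 4 * ((v : ℝ) * (v : ℝ)) := by
      intro i
      refine le_trans (variance_le_expectation_sq (hFmeas i).aestronglyMeasurable) ?_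
      have hle : ∫ ω, (F i ^ 2) ω ∂P ≤ ∫ ω, M ^ 4 * ((w i j ω) ^ 2 * (w i j' ω) ^ 2) ∂P := by
        refine integral_mono ?_ ((hprodint i).const_mul (M ^ 4)) ?_
        · exact hintF2 i
        · intro ω
          simpa using hF2le i ω
      refine le_trans hle ?_
      rw [integral_const_mul, hmul i]
    have hvcoe : (v : ℝ) = (σ2 : ℝ) / (m : ℝ) := by
      rw [hvdef, NNReal.coe_div, NNReal.coe_natCast]
    calc ∑ i, variance (F i) P ≤ ∑ _i : Fin n, M ^ 4 * ((v : ℝ) * (v : ℝ)) :=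
          Finset.sum_le_sum fun i _ => hbound i
      _ = n * (M ^ 4 * ((v : ℝ) * (v : ℝ))) := by
          rw [Finset.sum_const, Finset.card_univ, Fintype.card_fin, nsmul_eq_mul]
      _ = n * M ^ 4 * (σ2 : ℝ) ^ 2 / (m : ℝ) ^ 2 := by
          rw [hvcoe]; field_simp
end

section
/- Let w_1, …, w_n be independent Gaussian N(0, s²) random variables, let x ∈ ℝ^n be fixed, and set u = Σ_{k=1}^n w_k x_k. If f : ℝ → ℝ is Lipschitz with constant K, then for any two distinct indices i ≠ j, |E[f(u) w_i w_j]| ≤ √(2/π) · K · (|x_i| + |x_j|) · s³. In particular, since E[w_i w_j] = 0, the expectation E[f(u) w_i w_j] deviates from the mean-field factorization E[f(u)] E[w_i w_j] by at most √(2/π) K (|x_i| + |x_j|) s³. -/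
open MeasureTheory ProbabilityTheory NNReal

section Aux
open MeasureTheory ProbabilityTheory Real Filter Set
open scoped NNReal ENNReal

lemma gauss_int_abs_pow {b : ℝ} (hb : 0 < b) (k : ℕ) :
    Integrable (fun y : ℝ => |y| ^ k * Real.exp (-b * y ^ 2)) := by
  have h := (integrable_rpow_mul_exp_neg_mul_sq hb
    (s := (k : ℝ)) (lt_of_lt_of_le neg_one_lt_zero (Nat.cast_nonneg k))).abs
  refine h.congr (Filter.Eventually.of_forall fun y => ?_)
  simp only [Real.rpow_natCast, abs_mul, abs_pow, Real.abs_exp]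

lemma gauss_int_pow_even {b : ℝ} (hb : 0 < b) :
    Integrable (fun y : ℝ => y ^ 2 * Real.exp (-b * y ^ 2)) :=
  (gauss_int_abs_pow hb 2).congr (Filter.Eventually.of_forall fun y => by simp [sq_abs])

lemma tendsto_exp_neg_sq {b : ℝ} (hb : 0 < b) :
    Tendsto (fun x : ℝ => Real.exp (-b * x ^ 2)) atTop (nhds 0) := by
  have h1 : Tendsto (fun x : ℝ => b * x ^ 2) atTop atTop :=
    (tendsto_pow_atTop two_ne_zero).const_mul_atTop hb
  have := (Real.tendsto_exp_neg_atTop_nhds_zero).comp h1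
  simpa [Function.comp_def, neg_mul] using this

lemma int_Ioi_x {b : ℝ} (hb : 0 < b) :
    ∫ x in Ioi (0:ℝ), x * Real.exp (-b * x ^ 2) = (2 * b)⁻¹ := by
  have hderiv : ∀ x ∈ Ioi (0:ℝ), HasDerivAt (fun x : ℝ => -(2*b)⁻¹ * Real.exp (-b * x ^ 2))
      (x * Real.exp (-b * x ^ 2)) x := by
    intro x _
    have h1 : HasDerivAt (fun x : ℝ => -b * x ^ 2) (-b * (2 * x)) x := by
      simpa using (hasDerivAt_pow 2 x).const_mul (-b)
    have h2 := (h1.exp).const_mul (-(2*b)⁻¹)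
    refine h2.congr_deriv ?_
    have hb0 : (2*b) * (2*b)⁻¹ = 1 := mul_inv_cancel₀ (by positivity)
    linear_combination (x * Real.exp (-b * x ^ 2)) * hb0
  have hcont : ContinuousWithinAt (fun x : ℝ => -(2*b)⁻¹ * Real.exp (-b * x ^ 2)) (Ici 0) 0 :=
    (Continuous.continuousWithinAt (by continuity))
  have htend : Tendsto (fun x : ℝ => -(2*b)⁻¹ * Real.exp (-b * x ^ 2)) atTop (nhds 0) := by
    simpa using (tendsto_exp_neg_sq hb).const_mul (-(2*b)⁻¹)
  have h := integral_Ioi_of_hasDerivAt_of_tendsto hcont hderiv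
    ((integrable_mul_exp_neg_mul_sq hb).integrableOn) htend
  rw [h]; simp

lemma int_Ioi_x2 {b : ℝ} (hb : 0 < b) :
    ∫ x in Ioi (0:ℝ), x ^ 2 * Real.exp (-b * x ^ 2) = (2*b)⁻¹ * (Real.sqrt (π / b) / 2) := by
  set F := fun x : ℝ => -(2*b)⁻¹ * x * Real.exp (-b * x ^ 2) with hF
  have hderiv : ∀ x ∈ Ioi (0:ℝ), HasDerivAt F
      (x ^ 2 * Real.exp (-b * x ^ 2) - (2*b)⁻¹ * Real.exp (-b * x ^ 2)) x := by
    intro x _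
    have h1 : HasDerivAt (fun x : ℝ => -b * x ^ 2) (-b * (2 * x)) x := by
      simpa using (hasDerivAt_pow 2 x).const_mul (-b)
    have h2 : HasDerivAt (fun x : ℝ => -(2*b)⁻¹ * x) (-(2*b)⁻¹) x := by
      simpa using (hasDerivAt_id x).const_mul (-(2*b)⁻¹)
    have h3 := h2.mul h1.exp
    refine h3.congr_deriv ?_
    have hb0 : (2*b) * (2*b)⁻¹ = 1 := mul_inv_cancel₀ (by positivity)
    linear_combination (x ^ 2 * Real.exp (-b * x ^ 2)) * hb0
  have hcont : ContinuousWithinAt F (Ici 0) 0 :=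
    (Continuous.continuousWithinAt (by continuity))
  have htend : Tendsto F atTop (nhds 0) := by
    have hg : Tendsto (fun x : ℝ => Real.exp (-(1/2) * x)) atTop (nhds 0) := by
      have h1 : Tendsto (fun x : ℝ => (1/2 : ℝ) * x) atTop atTop :=
        tendsto_id.const_mul_atTop (by norm_num)
      simpa [Function.comp_def, neg_mul] using Real.tendsto_exp_neg_atTop_nhds_zero.comp h1
    have hx : Tendsto (fun x : ℝ => x * Real.exp (-b * x ^ 2)) atTop (nhds 0) := by
      have h := (rpow_mul_exp_neg_mul_sq_isLittleO_exp_neg hb 1).isBigO.trans_tendsto hg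
      refine h.congr' ?_
      filter_upwards [eventually_gt_atTop (0:ℝ)] with x hx
      rw [Real.rpow_one]
    have := hx.const_mul (-(2*b)⁻¹)
    simpa [hF, mul_assoc] using this
  have hint : IntegrableOn (fun x : ℝ =>
      x ^ 2 * Real.exp (-b * x ^ 2) - (2*b)⁻¹ * Real.exp (-b * x ^ 2)) (Ioi 0) :=
    ((gauss_int_pow_even hb).sub ((integrable_exp_neg_mul_sq hb).const_mul _)).integrableOn
  have h := integral_Ioi_of_hasDerivAt_of_tendsto hcont hderiv hint htend
  have hF0 : F 0 = 0 := by simp [hF]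
  rw [hF0, sub_zero] at h
  rw [integral_sub (gauss_int_pow_even hb).integrableOn
    ((integrable_exp_neg_mul_sq hb).const_mul _).integrableOn] at h
  have hgauss : ∫ x in Ioi (0:ℝ), (2*b)⁻¹ * Real.exp (-b * x ^ 2)
      = (2*b)⁻¹ * (Real.sqrt (π / b) / 2) := by
    rw [integral_const_mul, integral_gaussian_Ioi]
  rw [sub_eq_zero.mp h, hgauss]

lemma even_integral_eq {g : ℝ → ℝ} (hg : Integrable g) (he : ∀ x, g (-x) = g x) :
    ∫ x, g x = 2 * ∫ x in Ioi (0:ℝ), g x := by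
  have h1 := integral_comp_neg_Iic (0:ℝ) g
  simp only [he, neg_zero] at h1
  have h2 := integral_add_compl (measurableSet_Iic (a := (0:ℝ))) hg
  rw [compl_Iic] at h2
  rw [← h2, h1, two_mul]

lemma integral_gaussianReal_density {v : ℝ≥0} (hv : v ≠ 0) (g : ℝ → ℝ) :
    ∫ y, g y ∂(gaussianReal 0 v)
      = ∫ y, gaussianPDFReal 0 v y * g y := by
  rw [gaussianReal_of_var_ne_zero _ hv]
  have hpdf : gaussianPDF 0 v = fun y => ((Real.toNNReal (gaussianPDFReal 0 v y) : ℝ≥0) : ℝ≥0∞) :=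
    rfl
  rw [hpdf, integral_withDensity_eq_integral_smul
    ((measurable_gaussianPDFReal 0 v).real_toNNReal) g]
  congr 1
  funext y
  rw [NNReal.smul_def, smul_eq_mul, Real.coe_toNNReal _ (gaussianPDFReal_nonneg 0 v y)]

lemma gaussianPDFReal_zero_mean (v : ℝ≥0) (y : ℝ) :
    gaussianPDFReal 0 v y
      = (Real.sqrt (2 * π * v))⁻¹ * Real.exp (-(2 * (v:ℝ))⁻¹ * y ^ 2) := by
  rw [gaussianPDFReal]
  congr 2
  rw [sub_zero]
  by_cases hv : (v:ℝ) = 0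
  · simp [hv]
  · field_simp

lemma gaussianReal_integral_id (v : ℝ≥0) : ∫ y, y ∂(gaussianReal 0 v) = 0 := by
  have hmap : (gaussianReal 0 v).map (fun x : ℝ => -1 * x) = gaussianReal 0 v := by
    rw [gaussianReal_map_const_mul]
    norm_num
  have hint := integral_map (μ := gaussianReal 0 v) (φ := fun x : ℝ => -1 * x)
    (by fun_prop) (f := fun y : ℝ => y) measurable_id.aestronglyMeasurable
  rw [hmap] at hint
  simp only [neg_one_mul] at hint
  rw [integral_neg] at hint
  linarith

lemma gaussianReal_integral_sq {v : ℝ≥0} (hv : v ≠ 0) :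
    ∫ y, y ^ 2 ∂(gaussianReal 0 v) = (v : ℝ) := by
  have hV : 0 < (v:ℝ) := NNReal.coe_pos.mpr (pos_iff_ne_zero.mpr hv)
  set b : ℝ := (2 * (v:ℝ))⁻¹ with hbdef
  have hb : 0 < b := by positivity
  rw [integral_gaussianReal_density hv]
  have h1 : ∫ y, gaussianPDFReal 0 v y * y ^ 2
      = (Real.sqrt (2 * π * (v:ℝ)))⁻¹ * ∫ y, y ^ 2 * Real.exp (-b * y ^ 2) := by
    rw [← integral_const_mul]
    exact integral_congr_ae (Filter.Eventually.of_forall fun y => by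
      simp only [gaussianPDFReal_zero_mean]; ring)
  rw [h1]
  have h2 : ∫ y, y ^ 2 * Real.exp (-b * y ^ 2)
      = 2 * ∫ y in Ioi (0:ℝ), y ^ 2 * Real.exp (-b * y ^ 2) :=
    even_integral_eq (gauss_int_pow_even hb) (fun y => by simp [neg_sq])
  rw [h2, int_Ioi_x2 hb]
  have h2b : (2*b)⁻¹ = (v:ℝ) := by rw [hbdef]; field_simp
  have hrad : π / b = 2*π*(v:ℝ) := by rw [hbdef]; field_simp
  rw [h2b, hrad]
  have hs : 0 < Real.sqrt (2*π*(v:ℝ)) := Real.sqrt_pos.mpr (by positivity)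
  field_simp

lemma gaussianReal_integral_abs {v : ℝ≥0} (hv : v ≠ 0) :
    ∫ y, |y| ∂(gaussianReal 0 v) = Real.sqrt (2 / π) * Real.sqrt (v:ℝ) := by
  have hV : 0 < (v:ℝ) := NNReal.coe_pos.mpr (pos_iff_ne_zero.mpr hv)
  set b : ℝ := (2 * (v:ℝ))⁻¹ with hbdef
  have hb : 0 < b := by positivity
  rw [integral_gaussianReal_density hv]
  have h1 : ∫ y, gaussianPDFReal 0 v y * |y|
      = (Real.sqrt (2 * π * (v:ℝ)))⁻¹ * ∫ y, |y| * Real.exp (-b * y ^ 2) := by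
    rw [← integral_const_mul]
    exact integral_congr_ae (Filter.Eventually.of_forall fun y => by
      simp only [gaussianPDFReal_zero_mean]; ring)
  rw [h1]
  have hint : Integrable (fun y : ℝ => |y| * Real.exp (-b * y ^ 2)) := by
    simpa using gauss_int_abs_pow hb 1
  have h2 : ∫ y, |y| * Real.exp (-b * y ^ 2)
      = 2 * ∫ y in Ioi (0:ℝ), |y| * Real.exp (-b * y ^ 2) :=
    even_integral_eq hint (fun y => by simp [neg_sq])
  have h3 : ∫ y in Ioi (0:ℝ), |y| * Real.exp (-b * y ^ 2)
      = ∫ y in Ioi (0:ℝ), y * Real.exp (-b * y ^ 2) := by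
    refine setIntegral_congr_fun measurableSet_Ioi fun y hy => ?_
    rw [abs_of_pos hy]
  rw [h2, h3, int_Ioi_x hb]
  have h2b : (2*b)⁻¹ = (v:ℝ) := by rw [hbdef]; field_simp
  rw [h2b]
  have hs : 0 < Real.sqrt (2*π*(v:ℝ)) := Real.sqrt_pos.mpr (by positivity)
  have key : (Real.sqrt (2*π*(v:ℝ)))⁻¹ * (2 * (v:ℝ))
      = Real.sqrt ((2*(v:ℝ))^2 / (2*π*(v:ℝ))) := by
    rw [Real.sqrt_div (by positivity), Real.sqrt_sq (by positivity)]
    ring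
  rw [key]
  have hrad : (2*(v:ℝ))^2 / (2*π*(v:ℝ)) = 2/π * (v:ℝ) := by
    field_simp
  rw [hrad, Real.sqrt_mul (by positivity)]

lemma gaussianReal_integrable_abs_pow {v : ℝ≥0} (hv : v ≠ 0) (k : ℕ) :
    Integrable (fun y : ℝ => |y| ^ k) (gaussianReal 0 v) := by
  have hV : 0 < (v:ℝ) := NNReal.coe_pos.mpr (pos_iff_ne_zero.mpr hv)
  have hb : 0 < (2 * (v:ℝ))⁻¹ := by positivity
  rw [gaussianReal_of_var_ne_zero _ hv,
    integrable_withDensity_iff (measurable_gaussianPDF 0 v)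
      (Filter.Eventually.of_forall fun y => ENNReal.ofReal_lt_top)]
  have h : Integrable (fun y : ℝ =>
      (Real.sqrt (2 * π * (v:ℝ)))⁻¹ * (|y| ^ k * Real.exp (-(2*(v:ℝ))⁻¹ * y ^ 2))) :=
    (gauss_int_abs_pow hb k).const_mul _
  refine h.congr (Filter.Eventually.of_forall fun y => ?_)
  simp only [gaussianPDF_def]
  rw [ENNReal.toReal_ofReal (gaussianPDFReal_nonneg 0 v y),
    gaussianPDFReal_zero_mean]
  ring

end Aux

/-- **Self-averaging property, off-diagonal case.**
Let `w 1, …, w n` be independent `N(0, s²)` Gaussian random variables, `x ∈ ℝ^n` fixed,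
`u = ∑ k w k * x k`, and `f` Lipschitz with constant `K`.  Then for distinct indices
`i ≠ j`, `|E[f(u) w i w j]| ≤ √(2/π) K (|x i| + |x j|) s³`.  In particular, since
`E[w i w j] = 0`, the expectation `E[f(u) w i w j]` deviates from the mean-field
factorization `E[f(u)] E[w i w j]` by at most this bound. -/
theorem self_averaging_offdiagonal
    {Ω : Type*} [MeasurableSpace Ω] (P : Measure Ω) [IsProbabilityMeasure P]
    (n : ℕ) (s : ℝ≥0) (w : Fin n → Ω → ℝ) (x : Fin n → ℝ)
    (hw_meas : ∀ k, Measurable (w k))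
    (hw_law : ∀ k, Measure.map (w k) P = gaussianReal 0 (s ^ 2))
    (hindep : iIndepFun w P)
    (f : ℝ → ℝ) (K : ℝ≥0) (hf : LipschitzWith K f)
    (i j : Fin n) (hij : i ≠ j) :
    (∫ ω, w i ω * w j ω ∂P) = 0
    ∧ |∫ ω, f (∑ k, w k ω * x k) * (w i ω * w j ω) ∂P|
        ≤ Real.sqrt (2 / Real.pi) * K * (|x i| + |x j|) * (s : ℝ) ^ 3
    ∧ |(∫ ω, f (∑ k, w k ω * x k) * (w i ω * w j ω) ∂P)
          - (∫ ω, f (∑ k, w k ω * x k) ∂P) * (∫ ω, w i ω * w j ω ∂P)|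
        ≤ Real.sqrt (2 / Real.pi) * K * (|x i| + |x j|) * (s : ℝ) ^ 3 := by
  classical
  by_cases hs : s = 0
  · -- degenerate case: all variables are a.s. zero
    have hwz : ∀ k, w k =ᵐ[P] (fun _ => (0:ℝ)) := by
      intro k
      have h0 : (Measure.map (w k) P) ({(0:ℝ)}ᶜ) = 0 := by
        rw [hw_law k, hs]
        simp
      rw [Measure.map_apply (hw_meas k) (measurableSet_singleton (0:ℝ)).compl] at h0
      rw [Filter.EventuallyEq, ae_iff]
      convert h0 using 2
      rfl
    have hae1 : (fun ω => w i ω * w j ω) =ᵐ[P] (fun _ => (0:ℝ)) := by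
      filter_upwards [hwz i] with ω hω
      simp [hω]
    have hae2 : (fun ω => f (∑ k, w k ω * x k) * (w i ω * w j ω)) =ᵐ[P] (fun _ => (0:ℝ)) := by
      filter_upwards [hwz i] with ω hω
      simp [hω]
    have h1 : (∫ ω, w i ω * w j ω ∂P) = 0 := by
      rw [integral_congr_ae hae1, integral_zero]
    have h2 : (∫ ω, f (∑ k, w k ω * x k) * (w i ω * w j ω) ∂P) = 0 := by
      rw [integral_congr_ae hae2, integral_zero]
    exact ⟨h1, by rw [h2]; simp [hs], by rw [h2, h1]; simp [hs]⟩
  -- main case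
  have hv : s ^ 2 ≠ 0 := pow_ne_zero 2 hs
  set ν := gaussianReal 0 (s ^ 2) with hν
  set u : Ω → ℝ := fun ω => ∑ k, w k ω * x k with hu
  set Vf : Ω → ℝ := fun ω => ∑ k ∈ Finset.univ.erase j, w k ω * x k with hVf
  have husum : ∀ ω, u ω = Vf ω + w j ω * x j := fun ω =>
    (Finset.sum_erase_add _ _ (Finset.mem_univ j)).symm
  have hu_meas : Measurable u := Finset.measurable_sum _ fun k _ => (hw_meas k).mul_const _
  have hV_meas : Measurable Vf := Finset.measurable_sum _ fun k _ => (hw_meas k).mul_const _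
  -- transfer of Memℒp and moments
  have hmem2 : ∀ k, MemLp (w k) 2 P := by
    intro k
    have h1 : MemLp (id : ℝ → ℝ) 2 ν := by
      rw [memLp_two_iff_integrable_sq aestronglyMeasurable_id]
      exact (gaussianReal_integrable_abs_pow hv 2).congr
        (Filter.Eventually.of_forall fun y => by simp [sq_abs])
    have h2 : MemLp (id : ℝ → ℝ) 2 (Measure.map (w k) P) := by rw [hw_law k]; exact h1
    exact (memLp_map_measure_iff h2.aestronglyMeasurable (hw_meas k).aemeasurable).mp h2
  have hIntId : ∀ k, Integrable (w k) P := fun k => (hmem2 k).integrable one_le_two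
  have hIntSq : ∀ k, Integrable (fun ω => (w k ω)^2) P := fun k => (hmem2 k).integrable_sq
  have hIntAbs : ∀ k, Integrable (fun ω => |w k ω|) P := fun k => (hIntId k).abs
  have htransfer : ∀ k, ∀ g : ℝ → ℝ, Measurable g →
      ∫ ω, g (w k ω) ∂P = ∫ y, g y ∂ν := by
    intro k g hg
    have h := integral_map (μ := P) (φ := w k) (hw_meas k).aemeasurable
      (f := g) hg.aestronglyMeasurable
    rw [hw_law k] at h
    exact h.symm
  have hEId : ∀ k, ∫ ω, w k ω ∂P = 0 := fun k => by
    rw [htransfer k (fun y => y) measurable_id, hν, gaussianReal_integral_id]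
  have hESq : ∀ k, ∫ ω, (w k ω)^2 ∂P = (s:ℝ)^2 := fun k => by
    rw [htransfer k (fun y => y^2) (measurable_id.pow_const 2), hν,
      gaussianReal_integral_sq hv]
    push_cast
    ring
  have hEAbs : ∀ k, ∫ ω, |w k ω| ∂P = Real.sqrt (2 / Real.pi) * (s:ℝ) := fun k => by
    rw [htransfer k (fun y => |y|) measurable_abs, hν, gaussianReal_integral_abs hv]
    congr 1
    rw [NNReal.coe_pow, Real.sqrt_sq s.coe_nonneg]
  -- part 1
  have hindij : IndepFun (w i) (w j) P := hindep.indepFun hij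
  have hEij : ∫ ω, w i ω * w j ω ∂P = 0 := by
    rw [hindij.integral_fun_mul_eq_mul_integral (hIntId i).aestronglyMeasurable (hIntId j).aestronglyMeasurable,
      hEId i, zero_mul]
  -- independence of f(Vf) * w i from w j
  have hiS : i ∈ Finset.univ.erase j := Finset.mem_erase.mpr ⟨hij, Finset.mem_univ i⟩
  have hgind : IndepFun (fun ω => f (Vf ω) * w i ω) (w j) P := by
    have hdisj : Disjoint (Finset.univ.erase j) ({j} : Finset (Fin n)) := by
      simp [Finset.disjoint_singleton_right]
    have hbase := hindep.indepFun_finset (Finset.univ.erase j) {j} hdisj hw_meas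
    set S : Finset (Fin n) := Finset.univ.erase j with hS
    have hφ : Measurable (fun y : ↥S → ℝ => f (∑ k : ↥S, y k * x (k : Fin n)) * y ⟨i, hiS⟩) := by
      refine Measurable.mul ?_ (measurable_pi_apply _)
      exact (hf.continuous.measurable).comp
        (Finset.measurable_sum _ fun k _ => (measurable_pi_apply k).mul_const _)
    have hψ : Measurable (fun y : ↥({j} : Finset (Fin n)) → ℝ =>
        y ⟨j, Finset.mem_singleton_self j⟩) := measurable_pi_apply _
    have h := hbase.comp hφ hψ
    have heq1 : (fun y : ↥S → ℝ => f (∑ k : ↥S, y k * x (k : Fin n)) * y ⟨i, hiS⟩)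
        ∘ (fun a (k : ↥S) => w (k : Fin n) a) = fun ω => f (Vf ω) * w i ω := by
      funext ω
      show f (∑ k : ↥S, w (k : Fin n) ω * x (k : Fin n)) * w i ω = f (Vf ω) * w i ω
      congr 2
      exact Finset.sum_coe_sort S (fun k => w k ω * x k)
    have heq2 : (fun y : ↥({j} : Finset (Fin n)) → ℝ => y ⟨j, Finset.mem_singleton_self j⟩)
        ∘ (fun a (k : ↥({j} : Finset (Fin n))) => w (k : Fin n) a) = w j := rfl
    rwa [heq1, heq2] at h
  -- integrability facts
  have hIndAbsSq : IndepFun (fun ω => |w i ω|) (fun ω => (w j ω)^2) P :=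
    hindij.comp measurable_abs (measurable_id.pow_const 2)
  have hIntAbsSq : Integrable (fun ω => |w i ω| * (w j ω)^2) P :=
    hIndAbsSq.integrable_mul (hIntAbs i) (hIntSq j)
  have hu_mem : MemLp u 2 P := by
    refine memLp_finset_sum Finset.univ fun k _ => ?_
    refine MemLp.of_le ((hmem2 k).const_mul (x k)) ((hw_meas k).mul_const _).aestronglyMeasurable
      (Filter.Eventually.of_forall fun ω => ?_)
    simp [Real.norm_eq_abs, abs_mul, mul_comm]
  have hfu_mem : MemLp (fun ω => f (u ω)) 2 P := by
    have hdom : MemLp (fun ω => |f 0| + (K:ℝ) * ‖u ω‖) 2 P :=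
      (memLp_const (|f 0|)).add (hu_mem.norm.const_mul (K:ℝ))
    refine MemLp.of_le hdom ((hf.continuous.measurable.comp hu_meas).aestronglyMeasurable)
      (Filter.Eventually.of_forall fun ω => ?_)
    have h1 : |f (u ω) - f 0| ≤ (K:ℝ) * |u ω - 0| := by
      simpa [Real.dist_eq] using hf.dist_le_mul (u ω) 0
    rw [Real.norm_eq_abs, Real.norm_eq_abs]
    rw [sub_zero] at h1
    have h2 : |f (u ω)| ≤ |f 0| + (K:ℝ) * |u ω| := by
      have := abs_sub_abs_le_abs_sub (f (u ω)) (f 0)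
      linarith
    calc ‖f (u ω)‖ = |f (u ω)| := Real.norm_eq_abs _
      _ ≤ |f 0| + (K:ℝ) * |u ω| := h2
      _ = |f 0| + (K:ℝ) * ‖u ω‖ := by rw [Real.norm_eq_abs]
      _ ≤ ‖|f 0| + (K:ℝ) * ‖u ω‖‖ := by rw [Real.norm_eq_abs]; exact le_abs_self _
  have hq_mem : MemLp (fun ω => w i ω * w j ω) 2 P := by
    rw [memLp_two_iff_integrable_sq (f := fun ω => w i ω * w j ω) ((hw_meas i).mul (hw_meas j)).aestronglyMeasurable]
    have hsq : IndepFun (fun ω => (w i ω)^2) (fun ω => (w j ω)^2) P :=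
      hindij.comp (measurable_id.pow_const 2) (measurable_id.pow_const 2)
    exact (hsq.integrable_mul (hIntSq i) (hIntSq j)).congr
      (Filter.Eventually.of_forall fun ω => by simp [Pi.mul_apply, mul_pow])
  have hInt1 : Integrable (fun ω => f (u ω) * (w i ω * w j ω)) P := by
    have h := hq_mem.smul (φ := fun ω => f (u ω)) hfu_mem
      (p := 2) (q := 2) (r := 1)
    rw [memLp_one_iff_integrable] at h
    exact h.congr (Filter.Eventually.of_forall fun ω => by simp [Pi.smul_apply', smul_eq_mul])
  -- bound on the difference term
  have hD_bound : ∀ ω, |(f (u ω) - f (Vf ω)) * (w i ω * w j ω)|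
      ≤ ((K:ℝ) * |x j|) * (|w i ω| * (w j ω)^2) := by
    intro ω
    have hdiff : u ω - Vf ω = w j ω * x j := by rw [husum ω]; ring
    have h1 : |f (u ω) - f (Vf ω)| ≤ (K:ℝ) * (|w j ω| * |x j|) := by
      have := hf.dist_le_mul (u ω) (Vf ω)
      rw [Real.dist_eq, Real.dist_eq, hdiff, abs_mul] at this
      exact this
    calc |(f (u ω) - f (Vf ω)) * (w i ω * w j ω)|
        = |f (u ω) - f (Vf ω)| * (|w i ω| * |w j ω|) := by rw [abs_mul, abs_mul]
      _ ≤ ((K:ℝ) * (|w j ω| * |x j|)) * (|w i ω| * |w j ω|) := by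
          apply mul_le_mul_of_nonneg_right h1 (by positivity)
      _ = ((K:ℝ) * |x j|) * (|w i ω| * |w j ω|^2) := by ring
      _ = ((K:ℝ) * |x j|) * (|w i ω| * (w j ω)^2) := by rw [sq_abs]
  have hIntD : Integrable (fun ω => (f (u ω) - f (Vf ω)) * (w i ω * w j ω)) P := by
    refine Integrable.mono' (hIntAbsSq.const_mul ((K:ℝ) * |x j|)) ?_
      (Filter.Eventually.of_forall fun ω => ?_)
    · exact (((hf.continuous.measurable.comp hu_meas).sub
        (hf.continuous.measurable.comp hV_meas)).mul
        ((hw_meas i).mul (hw_meas j))).aestronglyMeasurable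
    · rw [Real.norm_eq_abs]
      exact hD_bound ω
  have hIntg : Integrable (fun ω => f (Vf ω) * (w i ω * w j ω)) P := by
    refine (hInt1.sub hIntD).congr (Filter.Eventually.of_forall fun ω => ?_)
    simp only [Pi.sub_apply]
    ring
  have hzero : ∫ ω, f (Vf ω) * (w i ω * w j ω) ∂P = 0 := by
    have heq : (fun ω => f (Vf ω) * (w i ω * w j ω))
        = fun ω => (f (Vf ω) * w i ω) * w j ω := by funext ω; ring
    rw [heq, hgind.integral_fun_mul_eq_mul_integral
      ((hf.continuous.measurable.comp hV_meas).mul (hw_meas i)).aestronglyMeasurable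
      (hw_meas j).aestronglyMeasurable, hEId j, mul_zero]
  have hsplit : ∫ ω, f (u ω) * (w i ω * w j ω) ∂P
      = ∫ ω, (f (u ω) - f (Vf ω)) * (w i ω * w j ω) ∂P := by
    have hadd : ∫ ω, f (u ω) * (w i ω * w j ω) ∂P
        = (∫ ω, (f (u ω) - f (Vf ω)) * (w i ω * w j ω) ∂P)
          + ∫ ω, f (Vf ω) * (w i ω * w j ω) ∂P := by
      rw [← integral_add hIntD hIntg]
      apply integral_congr_ae
      exact Filter.Eventually.of_forall fun ω => by ring
    rw [hadd, hzero, add_zero]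
  -- the main estimate
  have hprod : ∫ ω, |w i ω| * (w j ω)^2 ∂P = (Real.sqrt (2 / Real.pi) * (s:ℝ)) * (s:ℝ)^2 := by
    rw [hIndAbsSq.integral_fun_mul_eq_mul_integral (hIntAbs i).aestronglyMeasurable
      (hIntSq j).aestronglyMeasurable, hEAbs i, hESq j]
  have hmain : |∫ ω, f (u ω) * (w i ω * w j ω) ∂P|
      ≤ Real.sqrt (2 / Real.pi) * K * (|x i| + |x j|) * (s : ℝ) ^ 3 := by
    rw [hsplit]
    have h1 : |∫ ω, (f (u ω) - f (Vf ω)) * (w i ω * w j ω) ∂P|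
        ≤ ∫ ω, |(f (u ω) - f (Vf ω)) * (w i ω * w j ω)| ∂P := by
      have hn := norm_integral_le_integral_norm (μ := P)
        (fun ω => (f (u ω) - f (Vf ω)) * (w i ω * w j ω))
      simp only [Real.norm_eq_abs] at hn
      exact hn
    have h2 : ∫ ω, |(f (u ω) - f (Vf ω)) * (w i ω * w j ω)| ∂P
        ≤ ∫ ω, ((K:ℝ) * |x j|) * (|w i ω| * (w j ω)^2) ∂P := by
      refine integral_mono hIntD.abs (hIntAbsSq.const_mul _) fun ω => hD_bound ω
    have h3 : ∫ ω, ((K:ℝ) * |x j|) * (|w i ω| * (w j ω)^2) ∂P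
        = ((K:ℝ) * |x j|) * ((Real.sqrt (2 / Real.pi) * (s:ℝ)) * (s:ℝ)^2) := by
      rw [integral_const_mul, hprod]
    have h4 : ((K:ℝ) * |x j|) * ((Real.sqrt (2 / Real.pi) * (s:ℝ)) * (s:ℝ)^2)
        = Real.sqrt (2 / Real.pi) * K * |x j| * (s : ℝ) ^ 3 := by ring
    have h5 : Real.sqrt (2 / Real.pi) * K * |x j| * (s : ℝ) ^ 3
        ≤ Real.sqrt (2 / Real.pi) * K * (|x i| + |x j|) * (s : ℝ) ^ 3 := by
      gcongr
      · exact le_add_of_nonneg_left (abs_nonneg _)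
    calc |∫ ω, (f (u ω) - f (Vf ω)) * (w i ω * w j ω) ∂P|
        ≤ ∫ ω, |(f (u ω) - f (Vf ω)) * (w i ω * w j ω)| ∂P := h1
      _ ≤ ∫ ω, ((K:ℝ) * |x j|) * (|w i ω| * (w j ω)^2) ∂P := h2
      _ = Real.sqrt (2 / Real.pi) * K * |x j| * (s : ℝ) ^ 3 := by rw [h3, h4]
      _ ≤ _ := h5
  refine ⟨hEij, hmain, ?_⟩
  rw [hEij, mul_zero, sub_zero]
  exact hmain
end

section
/- Let w_1, …, w_n be independent Gaussian N(0, s²) random variables, let x ∈ ℝ^n be fixed, and set u = Σ_{k=1}^n w_k x_k. If f : ℝ → ℝ is Lipschitz with constant K, then for every index i, |E[f(u) w_i²] − s² E[f(u)]| ≤ 3 √(2/π) · K · |x_i| · s³; that is, the expectation of f(u) w_i² factorizes into E[f(u)] E[w_i²] up to an error of order s³. -/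
open MeasureTheory ProbabilityTheory NNReal
open Real Set

lemma integrable_abs_pow_mul_exp {b : ℝ} (hb : 0 < b) (m : ℕ) :
    Integrable (fun x : ℝ => |x| ^ m * Real.exp (-b * x ^ 2)) := by
  have hb2 : 0 < b / 2 := by linarith
  refine Integrable.mono' (((integrable_exp_neg_mul_sq hb2).const_mul
      (1 + m.factorial * (2 / b) ^ m))) ?_ (ae_of_all _ fun x => ?_)
  · exact ((measurable_abs.pow_const m).mul
      (((measurable_id.pow_const 2).const_mul (-b)).exp)).aestronglyMeasurable
  · have h1 : |x| ^ m ≤ 1 + (x ^ 2) ^ m := by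
      rcases le_total (|x|) 1 with h | h
      · have := pow_le_one₀ (abs_nonneg x) h (n := m)
        nlinarith [pow_nonneg (sq_nonneg x) m]
      · have hx2 : |x| ≤ x ^ 2 := by nlinarith [abs_nonneg x, sq_abs x]
        have := pow_le_pow_left₀ (abs_nonneg x) hx2 m
        nlinarith
    have h2 : (x ^ 2) ^ m ≤ m.factorial * (2 / b) ^ m * Real.exp (b / 2 * x ^ 2) := by
      have ht : (0:ℝ) ≤ b / 2 * x ^ 2 := by positivity
      have := Real.pow_div_factorial_le_exp (x := b / 2 * x ^ 2) ht m
      have hfac : (0:ℝ) < m.factorial := by exact_mod_cast m.factorial_pos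
      rw [div_le_iff₀ hfac] at this
      have hx2 : (x ^ 2) ^ m = (2 / b) ^ m * (b / 2 * x ^ 2) ^ m := by
        rw [← mul_pow]; congr 1; field_simp
      rw [hx2]
      calc (2 / b) ^ m * (b / 2 * x ^ 2) ^ m
          ≤ (2 / b) ^ m * (Real.exp (b / 2 * x ^ 2) * m.factorial) := by
            apply mul_le_mul_of_nonneg_left this (by positivity)
        _ = m.factorial * (2 / b) ^ m * Real.exp (b / 2 * x ^ 2) := by ring
    have hexp : Real.exp (-b * x ^ 2) ≤ Real.exp (-(b/2) * x ^ 2) :=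
      Real.exp_le_exp.mpr (by nlinarith [sq_nonneg x])
    have hee : Real.exp (b / 2 * x ^ 2) * Real.exp (-b * x ^ 2)
        = Real.exp (-(b/2) * x ^ 2) := by
      rw [← Real.exp_add]; ring_nf
    have hnorm : ‖|x| ^ m * Real.exp (-b * x ^ 2)‖ = |x| ^ m * Real.exp (-b * x ^ 2) := by
      rw [Real.norm_eq_abs, abs_of_nonneg (by positivity)]
    rw [hnorm]
    calc |x| ^ m * Real.exp (-b * x ^ 2)
        ≤ (1 + (x ^ 2) ^ m) * Real.exp (-b * x ^ 2) := by
          apply mul_le_mul_of_nonneg_right h1 (Real.exp_pos _).le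
      _ = Real.exp (-b * x ^ 2) + (x ^ 2) ^ m * Real.exp (-b * x ^ 2) := by ring
      _ ≤ Real.exp (-(b/2) * x ^ 2)
            + m.factorial * (2 / b) ^ m * (Real.exp (b / 2 * x ^ 2) * Real.exp (-b * x ^ 2)) := by
          have step2 : (x ^ 2) ^ m * Real.exp (-b * x ^ 2)
              ≤ ↑m.factorial * (2 / b) ^ m *
                  (Real.exp (b / 2 * x ^ 2) * Real.exp (-b * x ^ 2)) := by
            calc (x ^ 2) ^ m * Real.exp (-b * x ^ 2)
                ≤ (m.factorial * (2 / b) ^ m * Real.exp (b / 2 * x ^ 2)) *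
                    Real.exp (-b * x ^ 2) := by
                  apply mul_le_mul_of_nonneg_right h2 (Real.exp_pos _).le
              _ = m.factorial * (2 / b) ^ m *
                  (Real.exp (b / 2 * x ^ 2) * Real.exp (-b * x ^ 2)) := by ring
          exact add_le_add hexp step2
      _ = (1 + m.factorial * (2 / b) ^ m) * Real.exp (-(b/2) * x ^ 2) := by
          rw [hee]; ring

lemma integral_gaussianReal_eq {v : ℝ≥0} (hv : v ≠ 0) (g : ℝ → ℝ) :
    ∫ y, g y ∂(gaussianReal 0 v) = ∫ x, gaussianPDFReal 0 v x * g x := by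
  rw [gaussianReal_of_var_ne_zero _ hv, gaussianPDF_def]
  have h : (fun x => ENNReal.ofReal (gaussianPDFReal 0 v x))
      = fun x => ((gaussianPDFReal 0 v x).toNNReal : ENNReal) := rfl
  rw [h, integral_withDensity_eq_integral_smul
      ((measurable_gaussianPDFReal 0 v).real_toNNReal) g]
  congr 1
  ext x
  simp [NNReal.smul_def, Real.coe_toNNReal _ (gaussianPDFReal_nonneg 0 v x)]

lemma integrable_gaussianReal_iff {v : ℝ≥0} (hv : v ≠ 0) {g : ℝ → ℝ} :
    Integrable g (gaussianReal 0 v)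
      ↔ Integrable (fun x => g x * gaussianPDFReal 0 v x) := by
  rw [gaussianReal_of_var_ne_zero _ hv, gaussianPDF_def,
    integrable_withDensity_iff (measurable_gaussianPDFReal 0 v).ennreal_ofReal
      (ae_of_all _ fun x => ENNReal.ofReal_lt_top)]
  refine integrable_congr (ae_of_all _ fun x => ?_)
  simp [ENNReal.toReal_ofReal (gaussianPDFReal_nonneg 0 v x)]

lemma integrable_abs_pow_gaussianReal (v : ℝ≥0) (m : ℕ) :
    Integrable (fun y : ℝ => |y| ^ m) (gaussianReal 0 v) := by
  by_cases hv : v = 0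
  · subst hv
    rw [gaussianReal_zero_var]
    refine ⟨(measurable_abs.pow_const m).aestronglyMeasurable, ?_⟩
    rw [HasFiniteIntegral, MeasureTheory.lintegral_dirac' _
      ((measurable_abs.pow_const m).enorm)]
    exact ENNReal.coe_lt_top
  · have hvpos : (0:ℝ) < v := lt_of_le_of_ne v.coe_nonneg (by exact_mod_cast (Ne.symm hv))
    set b : ℝ := (2 * (v:ℝ))⁻¹ with hb_def
    have hb : 0 < b := by positivity
    rw [integrable_gaussianReal_iff hv]
    have heq : (fun x : ℝ => |x| ^ m * gaussianPDFReal 0 v x)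
        = fun x => (Real.sqrt (2 * Real.pi * v))⁻¹ * (|x| ^ m * Real.exp (-b * x ^ 2)) := by
      funext x
      rw [gaussianPDFReal]
      rw [sub_zero]
      have : -x ^ 2 / (2 * (v:ℝ)) = -b * x ^ 2 := by
        rw [hb_def]; field_simp
      rw [this]; ring
    rw [heq]
    exact (integrable_abs_pow_mul_exp hb m).const_mul _

lemma gaussianReal_abs_moment {v : ℝ≥0} (hv : v ≠ 0) (m : ℕ) :
    ∫ y, |y| ^ m ∂(gaussianReal 0 v)
      = (Real.sqrt (2 * Real.pi * v))⁻¹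
          * ((2 * (v:ℝ)) ^ (((m:ℝ) + 1) / 2) * Real.Gamma (((m:ℝ) + 1) / 2)) := by
  have hvpos : (0:ℝ) < v := lt_of_le_of_ne v.coe_nonneg (by exact_mod_cast (Ne.symm hv))
  set b : ℝ := (2 * (v:ℝ))⁻¹ with hb_def
  have hb : 0 < b := by positivity
  rw [integral_gaussianReal_eq hv]
  have heq : (fun x : ℝ => gaussianPDFReal 0 v x * |x| ^ m)
      = fun x => (Real.sqrt (2 * Real.pi * v))⁻¹ * (|x| ^ m * Real.exp (-b * x ^ 2)) := by
    funext x
    rw [gaussianPDFReal, sub_zero]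
    have : -x ^ 2 / (2 * (v:ℝ)) = -b * x ^ 2 := by rw [hb_def]; field_simp
    rw [this]; ring
  rw [heq, integral_const_mul]
  congr 1
  have habs : (fun x : ℝ => |x| ^ m * Real.exp (-b * x ^ 2))
      = fun x => (fun t : ℝ => t ^ m * Real.exp (-b * t ^ 2)) |x| := by
    funext x; simp [sq_abs]
  rw [habs, integral_comp_abs
    (f := fun t : ℝ => t ^ m * Real.exp (-b * t ^ 2))]
  have hcongr : ∫ x in Ioi (0:ℝ), x ^ m * Real.exp (-b * x ^ 2)
      = ∫ x in Ioi (0:ℝ), x ^ (m:ℝ) * Real.exp (-b * x ^ ((2:ℕ):ℝ)) := by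
    refine setIntegral_congr_fun measurableSet_Ioi (fun x hx => ?_) |>.symm
    rw [Real.rpow_natCast, Real.rpow_natCast]
  rw [hcongr]
  have h2 : ((2:ℕ):ℝ) = (2:ℝ) := by norm_num
  rw [h2]
  rw [integral_rpow_mul_exp_neg_mul_rpow (by norm_num : (0:ℝ) < 2)
    (lt_of_lt_of_le (by norm_num) (Nat.cast_nonneg m) : (-1:ℝ) < (m:ℝ)) hb]
  have hbpow : b ^ (-((m:ℝ) + 1) / 2) = (2 * (v:ℝ)) ^ (((m:ℝ) + 1) / 2) := by
    rw [hb_def, ← Real.rpow_neg_one (2 * (v:ℝ)),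
      ← Real.rpow_mul (by positivity : (0:ℝ) ≤ 2 * (v:ℝ))]
    congr 1
    ring
  rw [hbpow]
  ring

lemma gaussianReal_abs_moment_one (v : ℝ≥0) :
    ∫ y, |y| ∂(gaussianReal 0 v) = Real.sqrt (2 / Real.pi) * Real.sqrt v := by
  by_cases hv : v = 0
  · subst hv; simp
  · have hvpos : (0:ℝ) < v := lt_of_le_of_ne v.coe_nonneg (by exact_mod_cast (Ne.symm hv))
    have h := gaussianReal_abs_moment hv 1
    simp only [pow_one, Nat.cast_one] at h
    rw [show ((1:ℝ) + 1) / 2 = 1 by norm_num, Real.rpow_one, Real.Gamma_one, mul_one] at h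
    rw [h]
    rw [show (2 * Real.pi * (v:ℝ)) = (2 * Real.pi) * (v:ℝ) by ring,
      Real.sqrt_mul (by positivity) (v:ℝ), Real.sqrt_mul (by norm_num : (0:ℝ) ≤ 2) Real.pi,
      Real.sqrt_div (by norm_num : (0:ℝ) ≤ 2) Real.pi]
    have ha : Real.sqrt 2 ^ 2 = 2 := Real.sq_sqrt (by norm_num)
    have hb : Real.sqrt Real.pi ^ 2 = Real.pi := Real.sq_sqrt Real.pi_pos.le
    have hc : Real.sqrt (v:ℝ) ^ 2 = (v:ℝ) := Real.sq_sqrt hvpos.le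
    have ha0 : Real.sqrt 2 ≠ 0 := by positivity
    have hb0 : Real.sqrt Real.pi ≠ 0 := by positivity
    have hc0 : Real.sqrt (v:ℝ) ≠ 0 := by positivity
    field_simp
    linear_combination (-(Real.sqrt 2 ^ 2)) * hc - (v:ℝ) * ha

lemma gaussianReal_sq_moment (v : ℝ≥0) :
    ∫ y, |y| ^ 2 ∂(gaussianReal 0 v) = (v:ℝ) := by
  by_cases hv : v = 0
  · subst hv; simp
  · have hvpos : (0:ℝ) < v := lt_of_le_of_ne v.coe_nonneg (by exact_mod_cast (Ne.symm hv))
    have h := gaussianReal_abs_moment hv 2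
    rw [show (((2:ℕ):ℝ) + 1) / 2 = 3 / 2 by norm_num] at h
    have hΓ : Real.Gamma (3 / 2) = Real.sqrt Real.pi / 2 := by
      rw [show (3:ℝ)/2 = 1/2 + 1 by norm_num, Real.Gamma_add_one (by norm_num),
        Real.Gamma_one_half_eq]
      ring
    have hpow : (2 * (v:ℝ)) ^ ((3:ℝ)/2) = 2 * (v:ℝ) * Real.sqrt (2 * (v:ℝ)) := by
      rw [show (3:ℝ)/2 = 1 + 1/2 by norm_num,
        Real.rpow_add (by positivity) 1 (1/2), Real.rpow_one,
        ← Real.sqrt_eq_rpow]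
    rw [h, hΓ, hpow]
    rw [Real.sqrt_mul (by norm_num : (0:ℝ) ≤ 2) (v:ℝ),
      show (2 * Real.pi * (v:ℝ)) = (2 * Real.pi) * (v:ℝ) by ring,
      Real.sqrt_mul (by positivity) (v:ℝ),
      Real.sqrt_mul (by norm_num : (0:ℝ) ≤ 2) Real.pi]
    have ha : Real.sqrt 2 ^ 2 = 2 := Real.sq_sqrt (by norm_num)
    have hb : Real.sqrt Real.pi ^ 2 = Real.pi := Real.sq_sqrt Real.pi_pos.le
    have hc : Real.sqrt (v:ℝ) ^ 2 = (v:ℝ) := Real.sq_sqrt hvpos.le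
    have ha0 : Real.sqrt 2 ≠ 0 := by positivity
    have hb0 : Real.sqrt Real.pi ≠ 0 := by positivity
    have hc0 : Real.sqrt (v:ℝ) ≠ 0 := by positivity
    field_simp

lemma gaussianReal_abs_moment_three (v : ℝ≥0) :
    ∫ y, |y| ^ 3 ∂(gaussianReal 0 v) = 2 * Real.sqrt (2 / Real.pi) * Real.sqrt v ^ 3 := by
  by_cases hv : v = 0
  · subst hv; simp
  · have hvpos : (0:ℝ) < v := lt_of_le_of_ne v.coe_nonneg (by exact_mod_cast (Ne.symm hv))
    have h := gaussianReal_abs_moment hv 3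
    rw [show (((3:ℕ):ℝ) + 1) / 2 = 2 by norm_num] at h
    have hΓ : Real.Gamma (2:ℝ) = 1 := by
      rw [show (2:ℝ) = 1 + 1 by norm_num, Real.Gamma_add_one (by norm_num),
        Real.Gamma_one]
      ring
    have hpow : (2 * (v:ℝ)) ^ ((2:ℝ)) = (2 * (v:ℝ)) ^ (2:ℕ) := by
      rw [← Real.rpow_natCast (2 * (v:ℝ)) 2]; norm_num
    rw [h, hΓ, hpow]
    rw [show (2 * Real.pi * (v:ℝ)) = (2 * Real.pi) * (v:ℝ) by ring,
      Real.sqrt_mul (by positivity) (v:ℝ),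
      Real.sqrt_mul (by norm_num : (0:ℝ) ≤ 2) Real.pi,
      Real.sqrt_div (by norm_num : (0:ℝ) ≤ 2) Real.pi]
    have ha : Real.sqrt 2 ^ 2 = 2 := Real.sq_sqrt (by norm_num)
    have hb : Real.sqrt Real.pi ^ 2 = Real.pi := Real.sq_sqrt Real.pi_pos.le
    have hc : Real.sqrt (v:ℝ) ^ 2 = (v:ℝ) := Real.sq_sqrt hvpos.le
    have ha0 : Real.sqrt 2 ≠ 0 := by positivity
    have hb0 : Real.sqrt Real.pi ≠ 0 := by positivity
    have hc0 : Real.sqrt (v:ℝ) ≠ 0 := by positivity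
    field_simp
    ring_nf
    linear_combination (-(Real.sqrt 2 ^ 2) * (Real.sqrt (v:ℝ) ^ 2 + (v:ℝ))) * hc - (v:ℝ) ^ 2 * ha


/-- **Self-averaging property, diagonal case.**
Let `w 1, …, w n` be independent `N(0, s²)` Gaussian random variables, `x ∈ ℝ^n` fixed,
`u = ∑ k w k * x k`, and `f` Lipschitz with constant `K`.  Then for every index `i`,
`|E[f(u) w i²] − s² E[f(u)]| ≤ 3 √(2/π) K |x i| s³`; that is, `E[f(u) w i²]` factorizes
into `E[f(u)] E[w i²]` up to an error of order `s³`. -/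
theorem self_averaging_diagonal
    {Ω : Type*} [MeasurableSpace Ω] (P : Measure Ω) [IsProbabilityMeasure P]
    (n : ℕ) (s : ℝ≥0) (w : Fin n → Ω → ℝ) (x : Fin n → ℝ)
    (hw_meas : ∀ k, Measurable (w k))
    (hw_law : ∀ k, Measure.map (w k) P = gaussianReal 0 (s ^ 2))
    (hindep : iIndepFun w P)
    (f : ℝ → ℝ) (K : ℝ≥0) (hf : LipschitzWith K f)
    (i : Fin n) :
    |(∫ ω, f (∑ k, w k ω * x k) * (w i ω) ^ 2 ∂P)
        - (s : ℝ) ^ 2 * ∫ ω, f (∑ k, w k ω * x k) ∂P|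
      ≤ 3 * Real.sqrt (2 / Real.pi) * K * |x i| * (s : ℝ) ^ 3 := by
  classical
  -- abbreviations
  set u : Ω → ℝ := fun ω => ∑ k, w k ω * x k with hu_def
  set v : Ω → ℝ := fun ω => ∑ k ∈ Finset.univ.erase i, w k ω * x k with hv_def
  have hσ : Real.sqrt ((s ^ 2 : ℝ≥0) : ℝ) = (s : ℝ) := by
    rw [NNReal.coe_pow, Real.sqrt_sq s.coe_nonneg]
  have hu_meas : Measurable u :=
    Finset.measurable_sum _ (fun k _ => (hw_meas k).mul_const (x k))
  have hv_meas : Measurable v :=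
    Finset.measurable_sum _ (fun k _ => (hw_meas k).mul_const (x k))
  have huv : ∀ ω, u ω = v ω + w i ω * x i := by
    intro ω
    rw [hu_def, hv_def]
    exact (Finset.sum_erase_add _ _ (Finset.mem_univ i)).symm
  -- integrability of powers of |w k|
  have habs : ∀ (k : Fin n) (m : ℕ), Integrable (fun ω => |w k ω| ^ m) P := by
    intro k m
    have h1 := integrable_abs_pow_gaussianReal (s ^ 2) m
    rw [← hw_law k] at h1
    exact (integrable_map_measure (measurable_abs.pow_const m).aestronglyMeasurable
      (hw_meas k).aemeasurable).mp h1
  -- moments of |w i|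
  have hmom : ∀ m : ℕ, ∫ ω, |w i ω| ^ m ∂P = ∫ y, |y| ^ m ∂(gaussianReal 0 (s ^ 2)) := by
    intro m
    rw [← hw_law i,
      integral_map (hw_meas i).aemeasurable (measurable_abs.pow_const m).aestronglyMeasurable]
  have hE1 : ∫ ω, |w i ω| ∂P = Real.sqrt (2 / Real.pi) * (s : ℝ) := by
    have := hmom 1
    simp only [pow_one] at this
    rw [this, gaussianReal_abs_moment_one, hσ]
  have hE3 : ∫ ω, |w i ω| ^ 3 ∂P = 2 * Real.sqrt (2 / Real.pi) * (s : ℝ) ^ 3 := by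
    rw [hmom 3, gaussianReal_abs_moment_three, hσ]
  have hE2 : ∫ ω, w i ω ^ 2 ∂P = ((s : ℝ)) ^ 2 := by
    have h := hmom 2
    rw [gaussianReal_sq_moment] at h
    rw [← NNReal.coe_pow]
    rw [← h]
    exact integral_congr_ae (ae_of_all _ fun ω => (sq_abs (w i ω)).symm)
  have hw2_int : Integrable (fun ω => w i ω ^ 2) P :=
    (habs i 2).congr (ae_of_all _ fun ω => sq_abs (w i ω))
  have hw1_int : Integrable (fun ω => |w i ω|) P := by
    have := habs i 1; simpa using this
  have hw3_int : Integrable (fun ω => |w i ω| ^ 3) P := habs i 3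
  -- Lipschitz bounds
  have hfd : ∀ a b : ℝ, |f a - f b| ≤ (K : ℝ) * |a - b| := by
    intro a b
    have := hf.dist_le_mul a b
    rwa [Real.dist_eq, Real.dist_eq] at this
  have hfb : ∀ t : ℝ, |f t| ≤ |f 0| + (K : ℝ) * |t| := by
    intro t
    have h1 : |f t| ≤ |f t - f 0| + |f 0| := by
      calc |f t| = |f t - f 0 + f 0| := by ring_nf
        _ ≤ |f t - f 0| + |f 0| := abs_add_le _ _
    have h2 := hfd t 0
    rw [sub_zero] at h2
    linarith
  -- independence of v and w i
  have hvi : IndepFun v (w i) P := by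
    set φ : Fin n → ℝ → ℝ := fun k => if k = i then id else (· * x k) with hφ_def
    have hφ : ∀ k, Measurable (φ k) := by
      intro k
      rw [hφ_def]
      dsimp only
      split
      · exact measurable_id
      · exact measurable_id.mul_const _
    have hgind : iIndepFun
        (fun k => φ k ∘ w k) P := hindep.comp φ hφ
    have hgmeas : ∀ k, Measurable (φ k ∘ w k) := fun k => (hφ k).comp (hw_meas k)
    have h := hgind.indepFun_finsetSum_of_notMem hgmeas
      (Finset.notMem_erase i Finset.univ)
    have h1 : (∑ j ∈ Finset.univ.erase i, (fun k => φ k ∘ w k) j) = v := by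
      funext ω
      rw [Finset.sum_apply, hv_def]
      refine Finset.sum_congr rfl fun j hj => ?_
      have hji : j ≠ i := Finset.ne_of_mem_erase hj
      simp [hφ_def, hji]
    have h2 : φ i ∘ w i = w i := by
      funext ω; simp [hφ_def]
    rw [h1] at h
    rwa [h2] at h
  have hfv_indep : IndepFun (fun ω => f (v ω)) (fun ω => w i ω ^ 2) P := by
    have := hvi.comp hf.continuous.measurable (measurable_id.pow_const 2)
    exact this
  -- integrable bounds for f ∘ u and f ∘ v
  have hg0_int : Integrable (fun ω => |f 0| + (K : ℝ) * ∑ k, |x k| * |w k ω|) P := by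
    refine (integrable_const _).add (Integrable.const_mul ?_ _)
    refine integrable_finset_sum _ fun k _ => ?_
    have := habs k 1
    simpa using this.const_mul |x k|
  have hfu_int : Integrable (fun ω => f (u ω)) P := by
    refine Integrable.mono' hg0_int
      (hf.continuous.measurable.comp hu_meas).aestronglyMeasurable
      (ae_of_all _ fun ω => ?_)
    rw [Real.norm_eq_abs]
    refine le_trans (hfb (u ω)) ?_
    have : |u ω| ≤ ∑ k, |x k| * |w k ω| := by
      rw [hu_def]
      refine le_trans (Finset.abs_sum_le_sum_abs _ _) ?_
      refine le_of_eq (Finset.sum_congr rfl fun k _ => ?_)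
      rw [abs_mul, mul_comm]
    have hK : (0:ℝ) ≤ (K : ℝ) := K.coe_nonneg
    nlinarith
  have hfv_int : Integrable (fun ω => f (v ω)) P := by
    refine Integrable.mono' hg0_int
      (hf.continuous.measurable.comp hv_meas).aestronglyMeasurable
      (ae_of_all _ fun ω => ?_)
    rw [Real.norm_eq_abs]
    refine le_trans (hfb (v ω)) ?_
    have : |v ω| ≤ ∑ k, |x k| * |w k ω| := by
      rw [hv_def]
      refine le_trans (Finset.abs_sum_le_sum_abs _ _) ?_
      refine Finset.sum_le_sum_of_subset_of_nonneg (Finset.erase_subset _ _)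
        (fun k _ _ => abs_nonneg _) |>.trans ?_
      refine le_of_eq (Finset.sum_congr rfl fun k _ => ?_)
      rw [abs_mul, mul_comm]
    have hK : (0:ℝ) ≤ (K : ℝ) := K.coe_nonneg
    nlinarith
  -- integrability of |w k| * w i ^ 2
  have hmix_int : ∀ k : Fin n, Integrable (fun ω => |w k ω| * w i ω ^ 2) P := by
    intro k
    by_cases hki : k = i
    · refine (habs i 3).congr (ae_of_all _ fun ω => ?_)
      show |w i ω| ^ 3 = |w k ω| * w i ω ^ 2
      rw [hki, ← sq_abs (w i ω)]
      ring
    · have hind : IndepFun (fun ω => |w k ω|) (fun ω => w i ω ^ 2) P :=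
        (hindep.indepFun hki).comp measurable_abs (measurable_id.pow_const 2)
      have h1 : Integrable (fun ω => |w k ω|) P := by have := habs k 1; simpa using this
      exact hind.integrable_mul h1 hw2_int
  -- integrability of f(u) * w i ^2 and f(v) * w i ^2
  have hfuw_int : Integrable (fun ω => f (u ω) * w i ω ^ 2) P := by
    have hbint : Integrable
        (fun ω => |f 0| * w i ω ^ 2 + (K:ℝ) * ∑ k, |x k| * (|w k ω| * w i ω ^ 2)) P := by
      refine (hw2_int.const_mul _).add (Integrable.const_mul ?_ _)
      exact integrable_finset_sum _ fun k _ => (hmix_int k).const_mul _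
    refine Integrable.mono' hbint
      (((hf.continuous.measurable.comp hu_meas).mul
        ((hw_meas i).pow_const 2)).aestronglyMeasurable)
      (ae_of_all _ fun ω => ?_)
    rw [Real.norm_eq_abs, abs_mul, abs_of_nonneg (sq_nonneg (w i ω))]
    have h1 : |f (u ω)| ≤ |f 0| + (K:ℝ) * ∑ k, |x k| * |w k ω| := by
      refine le_trans (hfb (u ω)) ?_
      have : |u ω| ≤ ∑ k, |x k| * |w k ω| := by
        rw [hu_def]
        refine le_trans (Finset.abs_sum_le_sum_abs _ _) ?_
        refine le_of_eq (Finset.sum_congr rfl fun k _ => ?_)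
        rw [abs_mul, mul_comm]
      have hK : (0:ℝ) ≤ (K : ℝ) := K.coe_nonneg
      nlinarith
    have h2 : (0:ℝ) ≤ w i ω ^ 2 := sq_nonneg _
    calc |f (u ω)| * w i ω ^ 2
        ≤ (|f 0| + (K:ℝ) * ∑ k, |x k| * |w k ω|) * w i ω ^ 2 :=
          mul_le_mul_of_nonneg_right h1 h2
      _ = |f 0| * w i ω ^ 2 + (K:ℝ) * ∑ k, |x k| * (|w k ω| * w i ω ^ 2) := by
          have hsum : ∑ k, |x k| * (|w k ω| * w i ω ^ 2)
              = (∑ k, |x k| * |w k ω|) * w i ω ^ 2 := by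
            rw [Finset.sum_mul]
            exact Finset.sum_congr rfl fun k _ => by ring
          rw [hsum]
          ring
  have hfvw_int : Integrable (fun ω => f (v ω) * w i ω ^ 2) P :=
    hfv_indep.integrable_mul hfv_int hw2_int
  -- product rule for independent factors
  have hprod : ∫ ω, f (v ω) * w i ω ^ 2 ∂P
      = (∫ ω, f (v ω) ∂P) * (s : ℝ) ^ 2 := by
    have := hfv_indep.integral_fun_mul_eq_mul_integral hfv_int.aestronglyMeasurable hw2_int.aestronglyMeasurable
    rw [← hE2]
    exact this
  -- main identity
  have hkey : (∫ ω, f (u ω) * w i ω ^ 2 ∂P) - (s : ℝ) ^ 2 * ∫ ω, f (u ω) ∂P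
      = ∫ ω, (f (u ω) - f (v ω)) * (w i ω ^ 2 - (s : ℝ) ^ 2) ∂P := by
    have expand : (fun ω => (f (u ω) - f (v ω)) * (w i ω ^ 2 - (s : ℝ) ^ 2))
        = fun ω => (f (u ω) * w i ω ^ 2 - f (v ω) * w i ω ^ 2
            - (s:ℝ)^2 * f (u ω)) + (s:ℝ)^2 * f (v ω) := by
      funext ω; ring
    have hA : Integrable (fun ω => f (u ω) * w i ω ^ 2 - f (v ω) * w i ω ^ 2) P :=
      hfuw_int.sub hfvw_int
    have hB : Integrable (fun ω => f (u ω) * w i ω ^ 2 - f (v ω) * w i ω ^ 2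
        - (s:ℝ)^2 * f (u ω)) P := hA.sub (hfu_int.const_mul _)
    have hD : Integrable (fun ω => (s:ℝ)^2 * f (v ω)) P := hfv_int.const_mul _
    rw [expand, integral_add hB hD, integral_sub hA (hfu_int.const_mul _),
      integral_sub hfuw_int hfvw_int, integral_const_mul, integral_const_mul, hprod]
    ring
  have hh_int : Integrable (fun ω => (f (u ω) - f (v ω)) * (w i ω ^ 2 - (s : ℝ) ^ 2)) P := by
    have : (fun ω => (f (u ω) - f (v ω)) * (w i ω ^ 2 - (s : ℝ) ^ 2))
        = fun ω => (f (u ω) * w i ω ^ 2 - f (v ω) * w i ω ^ 2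
            - (s:ℝ)^2 * f (u ω)) + (s:ℝ)^2 * f (v ω) := by
      funext ω; ring
    rw [this]
    exact ((hfuw_int.sub hfvw_int).sub (hfu_int.const_mul _)).add (hfv_int.const_mul _)
  -- pointwise bound
  have hpt : ∀ ω, |(f (u ω) - f (v ω)) * (w i ω ^ 2 - (s : ℝ) ^ 2)|
      ≤ (K : ℝ) * |x i| * (|w i ω| ^ 3 + (s:ℝ)^2 * |w i ω|) := by
    intro ω
    rw [abs_mul]
    have h1 : |f (u ω) - f (v ω)| ≤ (K:ℝ) * (|w i ω| * |x i|) := by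
      have hdiff : u ω - v ω = w i ω * x i := by rw [huv ω]; ring
      calc |f (u ω) - f (v ω)| ≤ (K:ℝ) * |u ω - v ω| := hfd _ _
        _ = (K:ℝ) * (|w i ω| * |x i|) := by rw [hdiff, abs_mul]
    have h2 : |w i ω ^ 2 - (s:ℝ)^2| ≤ w i ω ^ 2 + (s:ℝ)^2 := by
      refine le_trans (abs_sub _ _) ?_
      rw [abs_of_nonneg (sq_nonneg _), abs_of_nonneg (sq_nonneg _)]
    have h3 : (0:ℝ) ≤ |w i ω ^ 2 - (s:ℝ)^2| := abs_nonneg _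
    have h4 : (0:ℝ) ≤ |f (u ω) - f (v ω)| := abs_nonneg _
    calc |f (u ω) - f (v ω)| * |w i ω ^ 2 - (s:ℝ)^2|
        ≤ ((K:ℝ) * (|w i ω| * |x i|)) * (w i ω ^ 2 + (s:ℝ)^2) := by
          apply mul_le_mul h1 h2 h3 (by positivity)
      _ = (K:ℝ) * |x i| * (|w i ω| * w i ω ^ 2 + (s:ℝ)^2 * |w i ω|) := by ring
      _ = (K:ℝ) * |x i| * (|w i ω| ^ 3 + (s:ℝ)^2 * |w i ω|) := by
          rw [← sq_abs (w i ω)]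
          ring_nf
  -- finish
  have hbound_int : Integrable (fun ω => (K:ℝ) * |x i| * (|w i ω| ^ 3 + (s:ℝ)^2 * |w i ω|)) P :=
    ((hw3_int.add (hw1_int.const_mul _)).const_mul _)
  calc |(∫ ω, f (u ω) * w i ω ^ 2 ∂P) - (s : ℝ) ^ 2 * ∫ ω, f (u ω) ∂P|
      = |∫ ω, (f (u ω) - f (v ω)) * (w i ω ^ 2 - (s : ℝ) ^ 2) ∂P| := by rw [hkey]
    _ ≤ ∫ ω, |(f (u ω) - f (v ω)) * (w i ω ^ 2 - (s : ℝ) ^ 2)| ∂P := by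
        exact norm_integral_le_integral_norm
          (fun ω => (f (u ω) - f (v ω)) * (w i ω ^ 2 - (s : ℝ) ^ 2)) (μ := P)
    _ ≤ ∫ ω, (K:ℝ) * |x i| * (|w i ω| ^ 3 + (s:ℝ)^2 * |w i ω|) ∂P :=
        integral_mono hh_int.abs hbound_int hpt
    _ = (K:ℝ) * |x i| * ((∫ ω, |w i ω| ^ 3 ∂P) + (s:ℝ)^2 * ∫ ω, |w i ω| ∂P) := by
        rw [integral_const_mul, integral_add hw3_int (hw1_int.const_mul _),
          integral_const_mul]
    _ = 3 * Real.sqrt (2 / Real.pi) * (K:ℝ) * |x i| * (s : ℝ) ^ 3 := by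
        rw [hE1, hE3]
        ring
end

section
/- Let n ≥ 1, let w ∈ ℝ^n be nonzero, and let A₀₀, A₀ₙ, Aₙₙ be real numbers with A₀₀ ≠ 0 and D := A₀₀ Aₙₙ − A₀ₙ² ≠ 0. With w̃ = (w, 0) ∈ ℝ^{n+1} and e₀ = (0, …, 0, 1) ∈ ℝ^{n+1}, define the (n+1)×(n+1) matrix G = A₀₀ I_{n+1} + ((Aₙₙ − A₀₀)/‖w‖²) w̃ w̃ᵀ + (A₀ₙ/‖w‖)(e₀ w̃ᵀ + w̃ e₀ᵀ). Then G is invertible and G⁻¹ = Ā₀₀ I_{n+1} + (X/‖w‖²) w̃ w̃ᵀ + (Y/‖w‖)(e₀ w̃ᵀ + w̃ e₀ᵀ) + Z e₀ e₀ᵀ, where Ā₀₀ = 1/A₀₀, X = A₀₀/D − 1/A₀₀, Y = −A₀ₙ/D, and Z = Aₙₙ/D − 1/A₀₀. -/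
open Matrix

private lemma vmv_mul_vmv {m : ℕ} (u v x y : Fin m → ℝ) :
    vecMulVec u v * vecMulVec x y = (v ⬝ᵥ x) • vecMulVec u y := by
  ext i j
  simp only [Matrix.mul_apply, vecMulVec_apply, Matrix.smul_apply, dotProduct, smul_eq_mul,
    Finset.sum_mul]
  exact Finset.sum_congr rfl fun k _ => by ring

private lemma snoc_dot {m : ℕ} (u v : Fin m → ℝ) (a b : ℝ) :
    (Fin.snoc u a : Fin (m + 1) → ℝ) ⬝ᵥ (Fin.snoc v b : Fin (m + 1) → ℝ)
      = u ⬝ᵥ v + a * b := by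
  simp [dotProduct, Fin.sum_univ_castSucc]

set_option maxHeartbeats 1000000

/-- **Explicit inversion of the unit-wise Fisher information matrix.**
For `n ≥ 1`, `w ∈ ℝ^n` nonzero, and reals `A₀₀ ≠ 0`, `A₀ₙ`, `Aₙₙ` with
`D = A₀₀ Aₙₙ − A₀ₙ² ≠ 0`, the matrix
`G = A₀₀ I + ((Aₙₙ − A₀₀)/‖w‖²) w̃ w̃ᵀ + (A₀ₙ/‖w‖)(e₀ w̃ᵀ + w̃ e₀ᵀ)` (with `w̃ = (w, 0)`
and `e₀ = (0, …, 0, 1)` in `ℝ^{n+1}`) is invertible and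
`G⁻¹ = Ā₀₀ I + (X/‖w‖²) w̃ w̃ᵀ + (Y/‖w‖)(e₀ w̃ᵀ + w̃ e₀ᵀ) + Z e₀ e₀ᵀ`, where
`Ā₀₀ = 1/A₀₀`, `X = A₀₀/D − 1/A₀₀`, `Y = −A₀ₙ/D`, `Z = Aₙₙ/D − 1/A₀₀`. -/
theorem unitwise_fisher_inverse
    (n : ℕ) (hn : 1 ≤ n) (w : Fin n → ℝ) (hw : w ≠ 0)
    (A00 A0n Ann : ℝ) (hA00 : A00 ≠ 0)
    (D : ℝ) (hD : D = A00 * Ann - A0n ^ 2) (hD0 : D ≠ 0)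
    (Abar X Y Z : ℝ)
    (hAbar : Abar = 1 / A00) (hX : X = A00 / D - 1 / A00)
    (hY : Y = -A0n / D) (hZ : Z = Ann / D - 1 / A00)
    (G : Matrix (Fin (n + 1)) (Fin (n + 1)) ℝ)
    (hG : G = A00 • (1 : Matrix (Fin (n + 1)) (Fin (n + 1)) ℝ)
        + ((Ann - A00) / Real.sqrt (∑ k, w k ^ 2) ^ 2) •
            vecMulVec (Fin.snoc w 0 : Fin (n + 1) → ℝ) (Fin.snoc w 0 : Fin (n + 1) → ℝ)
        + (A0n / Real.sqrt (∑ k, w k ^ 2)) •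
            (vecMulVec (Fin.snoc 0 1 : Fin (n + 1) → ℝ) (Fin.snoc w 0 : Fin (n + 1) → ℝ)
              + vecMulVec (Fin.snoc w 0 : Fin (n + 1) → ℝ)
                  (Fin.snoc 0 1 : Fin (n + 1) → ℝ))) :
    IsUnit G ∧
    G⁻¹ = Abar • (1 : Matrix (Fin (n + 1)) (Fin (n + 1)) ℝ)
        + (X / Real.sqrt (∑ k, w k ^ 2) ^ 2) •
            vecMulVec (Fin.snoc w 0 : Fin (n + 1) → ℝ) (Fin.snoc w 0 : Fin (n + 1) → ℝ)
        + (Y / Real.sqrt (∑ k, w k ^ 2)) •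
            (vecMulVec (Fin.snoc 0 1 : Fin (n + 1) → ℝ) (Fin.snoc w 0 : Fin (n + 1) → ℝ)
              + vecMulVec (Fin.snoc w 0 : Fin (n + 1) → ℝ)
                  (Fin.snoc 0 1 : Fin (n + 1) → ℝ))
        + Z • vecMulVec (Fin.snoc 0 1 : Fin (n + 1) → ℝ)
            (Fin.snoc 0 1 : Fin (n + 1) → ℝ) := by
  set s : ℝ := ∑ k, w k ^ 2 with hs_def
  have hs : 0 < s := by
    obtain ⟨k, hk⟩ := Function.ne_iff.mp hw
    exact Finset.sum_pos' (fun i _ => sq_nonneg _)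
      ⟨k, Finset.mem_univ k, lt_of_le_of_ne (sq_nonneg _) (Ne.symm (pow_ne_zero 2 hk))⟩
  set r : ℝ := Real.sqrt s with hr_def
  have hr2 : r ^ 2 = s := Real.sq_sqrt hs.le
  have hr0 : r ≠ 0 := by
    intro h
    rw [h] at hr2
    simp at hr2
    exact absurd hr2.symm hs.ne'
  set wt : Fin (n + 1) → ℝ := Fin.snoc w 0 with hwt
  set e0 : Fin (n + 1) → ℝ := Fin.snoc 0 1 with he0
  have dww : wt ⬝ᵥ wt = s := by
    rw [hwt, snoc_dot]
    simp [dotProduct, hs_def, sq]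
  have dwe : wt ⬝ᵥ e0 = 0 := by
    rw [hwt, he0, snoc_dot]
    simp [dotProduct]
  have dew : e0 ⬝ᵥ wt = 0 := by
    rw [hwt, he0, snoc_dot]
    simp [dotProduct]
  have dee : e0 ⬝ᵥ e0 = 1 := by
    rw [he0, snoc_dot]
    simp [dotProduct]
  set B : Matrix (Fin (n + 1)) (Fin (n + 1)) ℝ :=
    Abar • (1 : Matrix (Fin (n + 1)) (Fin (n + 1)) ℝ)
      + (X / r ^ 2) • vecMulVec wt wt
      + (Y / r) • (vecMulVec e0 wt + vecMulVec wt e0)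
      + Z • vecMulVec e0 e0 with hB
  have hBG : B * G = 1 := by
    rw [hB, hG]
    simp only [mul_add, add_mul, smul_mul_assoc, Matrix.mul_smul, one_mul, mul_one,
      Matrix.smul_mul, vmv_mul_vmv, dww, dwe, dew, dee, smul_add, smul_smul]
    rw [show (1 : Matrix (Fin (n+1)) (Fin (n+1)) ℝ) =
      (1:ℝ) • (1 : Matrix (Fin (n+1)) (Fin (n+1)) ℝ) + (0:ℝ) • vecMulVec wt wt
      + (0:ℝ) • vecMulVec e0 wt + (0:ℝ) • vecMulVec wt e0 + (0:ℝ) • vecMulVec e0 e0 by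
        simp]
    match_scalars <;>
      · simp only [hAbar, hX, hY, hZ, hD, ← hr2]
        have hD0' : A00 * Ann - A0n ^ 2 ≠ 0 := hD ▸ hD0
        field_simp
        try ring
  refine ⟨(Matrix.isUnit_iff_isUnit_det G).mpr (Matrix.isUnit_det_of_right_inverse (mul_eq_one_comm.mp hBG)), ?_⟩
  rw [Matrix.inv_eq_left_inv hBG, hB]
end

section
/- Let n ≥ 1, let w ∈ ℝ^n be nonzero, and let A₀₀, A₀ₙ, Aₙₙ be real numbers with A₀₀ ≠ 0 and D := A₀₀ Aₙₙ − A₀ₙ² ≠ 0. With G the (n+1)×(n+1) matrix A₀₀ I_{n+1} + ((Aₙₙ − A₀₀)/‖w‖²) w̃ w̃ᵀ + (A₀ₙ/‖w‖)(e₀ w̃ᵀ + w̃ e₀ᵀ), where w̃ = (w, 0) and e₀ = (0, …, 0, 1), and for any x ∈ ℝ^n with augmented vector x* = (x, 1) ∈ ℝ^{n+1}, the natural-gradient direction G⁻¹ x* is given explicitly in split form: its first n coordinates equal Ā₀₀ x + (X (w·x)/‖w‖² + Y/‖w‖) w and its last coordinate equals Ā₀₀ + Y (w·x)/‖w‖ +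 Z, where Ā₀₀ = 1/A₀₀, X = A₀₀/D − 1/A₀₀, Y = −A₀ₙ/D, Z = Aₙₙ/D − 1/A₀₀. -/
open Matrix

lemma vmv_mulVec {n : ℕ} (a b v : Fin n → ℝ) :
    (vecMulVec a b).mulVec v = (b ⬝ᵥ v) • a := by
  funext i
  simp [vecMulVec_apply, mulVec, dotProduct, Finset.mul_sum, mul_comm, mul_assoc, mul_left_comm]

lemma dot_snoc {n : ℕ} (a b : Fin n → ℝ) (a' b' : ℝ) :
    (Fin.snoc a a' : Fin (n+1) → ℝ) ⬝ᵥ (Fin.snoc b b') = a ⬝ᵥ b + a' * b' := by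
  simp [dotProduct, Fin.sum_univ_castSucc]

set_option maxHeartbeats 1000000 in
/-- **Explicit unit-wise natural gradient direction.**
With `G` the unit-wise Fisher information matrix
`G = A₀₀ I + ((Aₙₙ − A₀₀)/‖w‖²) w̃ w̃ᵀ + (A₀ₙ/‖w‖)(e₀ w̃ᵀ + w̃ e₀ᵀ)` (where `w̃ = (w, 0)`,
`e₀ = (0, …, 0, 1)`, `A₀₀ ≠ 0`, `D = A₀₀ Aₙₙ − A₀ₙ² ≠ 0`), the natural-gradient direction
`G⁻¹ x*` for the augmented input `x* = (x, 1)` is given in split form: its first `n`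
coordinates are `Ā₀₀ x + (X (w·x)/‖w‖² + Y/‖w‖) w` and its last coordinate is
`Ā₀₀ + Y (w·x)/‖w‖ + Z`, with `Ā₀₀ = 1/A₀₀`, `X = A₀₀/D − 1/A₀₀`, `Y = −A₀ₙ/D`,
`Z = Aₙₙ/D − 1/A₀₀`. -/
theorem unitwise_natural_gradient
    (n : ℕ) (hn : 1 ≤ n) (w : Fin n → ℝ) (hw : w ≠ 0)
    (A00 A0n Ann : ℝ) (hA00 : A00 ≠ 0)
    (D : ℝ) (hD : D = A00 * Ann - A0n ^ 2) (hD0 : D ≠ 0)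
    (Abar X Y Z : ℝ)
    (hAbar : Abar = 1 / A00) (hX : X = A00 / D - 1 / A00)
    (hY : Y = -A0n / D) (hZ : Z = Ann / D - 1 / A00)
    (G : Matrix (Fin (n + 1)) (Fin (n + 1)) ℝ)
    (hG : G = A00 • (1 : Matrix (Fin (n + 1)) (Fin (n + 1)) ℝ)
        + ((Ann - A00) / Real.sqrt (∑ k, w k ^ 2) ^ 2) •
            vecMulVec (Fin.snoc w 0 : Fin (n + 1) → ℝ) (Fin.snoc w 0 : Fin (n + 1) → ℝ)
        + (A0n / Real.sqrt (∑ k, w k ^ 2)) •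
            (vecMulVec (Fin.snoc 0 1 : Fin (n + 1) → ℝ) (Fin.snoc w 0 : Fin (n + 1) → ℝ)
              + vecMulVec (Fin.snoc w 0 : Fin (n + 1) → ℝ)
                  (Fin.snoc 0 1 : Fin (n + 1) → ℝ)))
    (x : Fin n → ℝ) :
    G⁻¹.mulVec (Fin.snoc x 1 : Fin (n + 1) → ℝ)
      = (Fin.snoc
          (fun k => Abar * x k
            + (X * (∑ k', w k' * x k') / Real.sqrt (∑ k', w k' ^ 2) ^ 2
                + Y / Real.sqrt (∑ k', w k' ^ 2)) * w k)
          (Abar + Y * (∑ k', w k' * x k') / Real.sqrt (∑ k', w k' ^ 2) + Z)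
        : Fin (n + 1) → ℝ) := by
  have hs : 0 < ∑ k, w k ^ 2 := by
    have : ∃ k, w k ≠ 0 := by
      by_contra h
      push_neg at h
      exact hw (funext h)
    obtain ⟨k, hk⟩ := this
    exact Finset.sum_pos' (fun i _ => sq_nonneg _)
      ⟨k, Finset.mem_univ k, by positivity⟩
  set s := ∑ k, w k ^ 2 with hsdef
  set r := Real.sqrt s with hrdef
  have hr2 : r ^ 2 = s := Real.sq_sqrt hs.le
  have hr0 : r ≠ 0 := by positivity
  set u : Fin (n+1) → ℝ := Fin.snoc w 0 with hudef
  set e : Fin (n+1) → ℝ := Fin.snoc 0 1 with hedef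
  have huu : u ⬝ᵥ u = r ^ 2 := by
    rw [hudef, dot_snoc, hr2, hsdef]
    simp [dotProduct, pow_two]
  have hue : u ⬝ᵥ e = 0 := by rw [hudef, hedef, dot_snoc]; simp
  have heu : e ⬝ᵥ u = 0 := by rw [hudef, hedef, dot_snoc]; simp [dotProduct]
  have hee : e ⬝ᵥ e = 1 := by rw [hedef, dot_snoc]; simp [dotProduct]
  set H : Matrix (Fin (n+1)) (Fin (n+1)) ℝ :=
    Abar • (1 : Matrix (Fin (n+1)) (Fin (n+1)) ℝ)
      + (X / r ^ 2) • vecMulVec u u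
      + (Y / r) • (vecMulVec e u + vecMulVec u e)
      + Z • vecMulVec e e with hHdef
  have key : ∀ v : Fin (n+1) → ℝ, G.mulVec (H.mulVec v) = v := by
    intro v
    rw [hG, hHdef]
    simp only [add_mulVec, smul_mulVec, one_mulVec, vmv_mulVec,
      dotProduct_add, dotProduct_smul, mulVec_add, mulVec_smul,
      huu, hue, heu, hee, smul_eq_mul, smul_add, smul_smul]
    funext i
    simp only [Pi.add_apply, Pi.smul_apply, smul_eq_mul]
    subst hD hX hY hZ hAbar
    field_simp
    ring
  have hGH : G * H = 1 := by
    ext i j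
    have h := key (Pi.single j 1)
    rw [mulVec_mulVec] at h
    have h2 := congrFun h i
    simpa [Matrix.one_apply, Pi.single_apply, eq_comm] using h2
  rw [Matrix.inv_eq_right_inv hGH]
  have hux : u ⬝ᵥ (Fin.snoc x 1 : Fin (n+1) → ℝ) = ∑ k', w k' * x k' := by
    rw [hudef, dot_snoc]; simp [dotProduct]
  have hex : e ⬝ᵥ (Fin.snoc x 1 : Fin (n+1) → ℝ) = 1 := by
    rw [hedef, dot_snoc]; simp [dotProduct]
  rw [hHdef]
  simp only [add_mulVec, smul_mulVec, one_mulVec, vmv_mulVec, mulVec_add,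
    hux, hex, smul_add, smul_smul]
  funext i
  refine Fin.lastCases ?_ ?_ i
  · simp only [Pi.add_apply, Pi.smul_apply, smul_eq_mul, hudef, hedef,
      Fin.snoc_last, ← hr2]
    ring
  · intro k
    simp only [Pi.add_apply, Pi.smul_apply, smul_eq_mul, hudef, hedef,
      Fin.snoc_castSucc, Pi.zero_apply, ← hr2]
    ring
end
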